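/- arXiv:2110.01508 — 2 statements merged into one kernel-verified Lean document; each statement's English description precedes it below -/
import Mathlib

section
/- Every proper nonempty saturated primitive coideal of the zigzag graph Z is of the form Z(t) for some template t, and this template t is uniquely determined by the coideal. -/
/-!
Common definitions: the zigzag graph on binary words, templates and their coideals,
zigzag flanges and sections, the functions `F_λ(u)` and `φ_{t,w}`, and harmonic /
semifinite / indecomposable functions on subgraphs of the zigzag graph.
-/

open scoped ENNReal NNReal

namespace Zigzag

/-- Binary words: `true` is `+`, `false` is `−`. -/
abbrev BW := List Bool

/-- `CoveredBy a b`: `b` covers `a` in the subword order, i.e. `|b| = |a| + 1` and `a`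
is a subword of `b`; these are the edges of the zigzag graph. -/
def CoveredBy (a b : BW) : Prop := a.Sublist b ∧ b.length = a.length + 1

/-- The set of upper neighbours of `a` lying in `S` is finite. -/
lemma upSet_finite (S : Set BW) (a : BW) : {b | b ∈ S ∧ CoveredBy a b}.Finite :=
  (List.finite_length_eq Bool (a.length + 1)).subset (fun _ hb => hb.2.2)

/-- The finset of upper neighbours of `a` inside `S`. -/
noncomputable def upFinset (S : Set BW) (a : BW) : Finset BW :=
  (upSet_finite S a).toFinset

/-- A `[0,∞]`-valued function is harmonic on `S ⊆ Z` (with the edges induced from the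
zigzag graph) if its value at any vertex of `S` equals the sum of its values at the
upper neighbours lying in `S`. -/
def HarmonicOn (S : Set BW) (φ : BW → ℝ≥0∞) : Prop :=
  ∀ a ∈ S, φ a = ∑ b ∈ upFinset S a, φ b

/-- A template: a nonempty sequence of clusters with alternating signs, each cluster
being a sign (`true` = `+`, `false` = `−`) with a multiplicity in `{1,2,…} ∪ {∞}`,
containing at least one infinite cluster. -/
structure Template where
  clusters : List (Bool × ℕ∞)
  ne : clusters ≠ []
  pos : ∀ c ∈ clusters, c.2 ≠ 0
  alternating : clusters.Chain' fun c d => c.1 ≠ d.1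
  hasInf : ∃ c ∈ clusters, c.2 = ⊤

/-- The binary word obtained from a list of clusters by replacing every infinite
multiplicity by `N` (and keeping the finite multiplicities). -/
def clWord (cs : List (Bool × ℕ∞)) (N : ℕ) : BW :=
  (cs.map fun c => List.replicate (if c.2 = ⊤ then N else c.2.toNat) c.1).flatten

/-- The coideal generated by a list of clusters: all binary words that are subwords of
some instantiation. -/
def Zcl (cs : List (Bool × ℕ∞)) : Set BW := {a | ∃ N, a.Sublist (clWord cs N)}

/-- The coideal `Z(t)` of the zigzag graph attached to a template `t`. -/
def Zt (t : Template) : Set BW := Zcl t.clusters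

/-- The cluster in position `i` of `t` is a separating cluster: a one-symbol finite
cluster which is not outermost and whose two neighbours are infinite clusters
(necessarily of the same sign). -/
def Template.isSep (t : Template) (i : ℕ) : Prop :=
  0 < i ∧ i + 1 < t.clusters.length ∧
  (t.clusters.getD i (true, 1)).2 = 1 ∧
  (t.clusters.getD (i - 1) (true, 1)).2 = ⊤ ∧
  (t.clusters.getD (i + 1) (true, 1)).2 = ⊤

/-- A template is finite if all its finite clusters are separating; otherwise it is
semifinite. -/
def Template.IsFiniteTemplate (t : Template) : Prop :=
  ∀ i < t.clusters.length, (t.clusters.getD i (true, 1)).2 ≠ ⊤ → t.isSep i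

/-- The number of infinite clusters of a template. -/
def Template.numInf (t : Template) : ℕ :=
  (t.clusters.filter fun c => decide (c.2 = ⊤)).length

/-- Position `p` of `t` carries a finite non-separating cluster, i.e. a cluster
contributing to the zigzag flange of `t`. -/
def IsFlangePos (t : Template) (p : ℕ) : Prop :=
  p < t.clusters.length ∧ (t.clusters.getD p (true, 1)).2 ≠ ⊤ ∧ ¬t.isSep p

/-- Decrease by one the multiplicity of the cluster in position `p`. -/
def decAt (cs : List (Bool × ℕ∞)) (p : ℕ) : List (Bool × ℕ∞) :=
  cs.set p ((cs.getD p (true, 1)).1, (cs.getD p (true, 1)).2 - 1)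

/-- The coideal `J(t)`: the union of the coideals `Z(r)` over all `r` obtained from `t`
by removing a single symbol from a cluster corresponding to a block of a binary word
from the zigzag flange of `t` (no merging of clusters is needed to generate `Z(r)`). -/
def Jt (t : Template) : Set BW :=
  {a | ∃ p, IsFlangePos t p ∧ a ∈ Zcl (decAt t.clusters p)}

/-- The canonical splitting of a template `t` into its zigzag flange
`fl(t) = (a₀, …, a_k)` (given by the lists `A 0, …, A k` of clusters, each consisting
of finite non-separating clusters of `t`) and its sections `t₁, …, t_k` (the maximal
groups of consecutive clusters forming finite templates), so that
`t = (a₀, t₁, a₁, …, a_{k−1}, t_k, a_k)`.  The two `interior` conditions express the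
maximality of the decomposition. -/
structure SectionData (t : Template) where
  k : ℕ
  A : Fin (k + 1) → List (Bool × ℕ∞)
  T : Fin k → Template
  concat : t.clusters
      = A 0 ++ (List.ofFn fun i : Fin k => (T i).clusters ++ A i.succ).flatten
  finA : ∀ j, ∀ c ∈ A j, c.2 ≠ ⊤
  secFin : ∀ i, (T i).IsFiniteTemplate
  interior_ne : ∀ j : Fin (k + 1), (j : ℕ) ≠ 0 → (j : ℕ) ≠ k → A j ≠ []
  interior_not_sep : ∀ j : Fin (k + 1), (j : ℕ) ≠ 0 → (j : ℕ) ≠ k →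
      ∀ s : Bool, A j ≠ [(s, 1)]

/-- The binary word corresponding to a list of finite clusters (a flange word). -/
def flangeWord (cs : List (Bool × ℕ∞)) : BW :=
  (cs.map fun c => List.replicate c.2.toNat c.1).flatten

/-- `a₀ ⊔ ℓ 1 ⊔ a₁ ⊔ … ⊔ ℓ k ⊔ a_k` (empty flange words disappear). -/
def assemble {t : Template} (D : SectionData t) (ℓ : Fin D.k → BW) : BW :=
  flangeWord (D.A 0) ++ (List.ofFn fun i : Fin D.k => ℓ i ++ flangeWord (D.A i.succ)).flatten

/-- `ℓ` is a decomposition of `a` along the sections of `t`: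
`bw(a) = a₀ ⊔ bw(ℓ 1) ⊔ a₁ ⊔ … ⊔ bw(ℓ k) ⊔ a_k` with `ℓ i ∈ Z(tᵢ)`. -/
def decompOf {t : Template} (D : SectionData t) (a : BW) (ℓ : Fin D.k → BW) : Prop :=
  (∀ i, ℓ i ∈ Zt (D.T i)) ∧ a = assemble D ℓ

/-- The signs of the infinite clusters of a list of clusters, in order. -/
def infSigns (cs : List (Bool × ℕ∞)) : List Bool :=
  (cs.filter fun c => decide (c.2 = ⊤)).map Prod.fst

/-- The number of weights consumed by the sections preceding the `i`-th one. -/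
def secOffset {t : Template} (D : SectionData t) (i : Fin D.k) : ℕ :=
  ∑ i' ∈ Finset.univ.filter (· < i), (infSigns (D.T i').clusters).length

/-- The part `vᵢ` of the tuple of weights `w` corresponding to the infinite clusters of
the `i`-th section, as a sequence of (sign, weight) pairs. -/
def vD {t : Template} (D : SectionData t) (w : List ℝ) (i : Fin D.k) : List (Bool × ℝ) :=
  (infSigns (D.T i).clusters).zip (w.drop (secOffset D i))

/-- `F_λ(u)` for a finite sequence `u` of (sign, length) pairs and a zigzag `λ`
(encoded by its binary word `a`, so that `λ` has `a.length + 1` boxes): the sum, over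
all decompositions of `λ` into `u.length` consecutive (possibly empty) zigzags
`λ(1), …, λ(m)` with `λ(i)` a row when the `i`-th sign is `+` and a column when it is
`−`, of `u₁ ^ |λ(1)| ⋯ u_m ^ |λ(m)|`.  A decomposition is recorded by the tuple `c` of
the numbers of boxes of the pieces; the row/column constraint says that the letters of
`a` strictly inside the `i`-th group of boxes all equal the `i`-th sign. -/
noncomputable def Fword (u : List (Bool × ℝ)) (a : BW) : ℝ :=
  ∑ c ∈ (Finset.Nat.antidiagonalTuple u.length (a.length + 1)).filter
      (fun c => ∀ i : Fin u.length,
        (a.drop (∑ i' ∈ Finset.univ.filter (· < i), c i')).take (c i - 1)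
          = List.replicate (c i - 1) (u.get i).1),
    ∏ i, (u.get i).2 ^ c i

open Classical in
/-- The function `φ_{t,w}` attached to a semifinite zigzag growth model `(t, w)`:
it equals `+∞` on `J(t)`, and on `Z(t) ∖ J(t)` it equals
`F_{λ^{(1)}}(v₁) ⋯ F_{λ^{(k)}}(v_k)`, where `(λ^{(1)}, …, λ^{(k)})` is the (unique)
decomposition of `λ` along the sections of `t` (it is `0` off `Z(t)`). -/
noncomputable def phiTW (t : Template) (D : SectionData t) (w : List ℝ) (a : BW) : ℝ≥0∞ :=
  if a ∉ Zt t then 0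
  else if a ∈ Jt t then ⊤
  else if h : ∃ ℓ : Fin D.k → BW, decompOf D a ℓ then
    ENNReal.ofReal (∏ i, Fword (vD D w i) (h.choose i))
  else 0

section Kcone

/-- The relation `λ = ∑_{μ : λ ↗ μ} μ` (within `S`) as an element of the free module. -/
noncomputable def relOf (S : Set BW) (a : BW) : BW →₀ ℝ :=
  Finsupp.single a 1 - ∑ b ∈ upFinset S a, Finsupp.single b 1

/-- The submodule of relations defining `K(S)`. -/
noncomputable def Krel (S : Set BW) : Submodule ℝ (BW →₀ ℝ) :=
  Submodule.span ℝ {f | ∃ a ∈ S, f = relOf S a}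

/-- The class of `f` in `K(S) = (⊕_{λ ∈ S} ℝ λ) ⧸ (relations)`. -/
noncomputable def kmk (S : Set BW) (f : BW →₀ ℝ) : (BW →₀ ℝ) ⧸ Krel S :=
  Submodule.Quotient.mk f

/-- Nonnegative formal combinations of vertices of `S`. -/
def NonnegOn (S : Set BW) (f : BW →₀ ℝ) : Prop :=
  (∀ x, 0 ≤ f x) ∧ ∀ x ∈ f.support, x ∈ S

/-- The cone `K⁺(S)` spanned by the vertices of `S` in `K(S)`. -/
noncomputable def Kpos (S : Set BW) : Set ((BW →₀ ℝ) ⧸ Krel S) :=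
  kmk S '' {f | NonnegOn S f}

/-- The order defined by the cone `K⁺(S)`: `x ≤_K y` iff `y − x ∈ K⁺(S)`. -/
def leK (S : Set BW) (x y : (BW →₀ ℝ) ⧸ Krel S) : Prop := y - x ∈ Kpos S

/-- The value of (the canonical extension of) `φ` at a nonnegative combination of
vertices. -/
noncomputable def phiHat (φ : BW → ℝ≥0∞) (f : BW →₀ ℝ) : ℝ≥0∞ :=
  ∑ x ∈ f.support, ENNReal.ofReal (f x) * φ x

/-- `φ` is finite on `S`. -/
def FiniteOn (S : Set BW) (φ : BW → ℝ≥0∞) : Prop := ∀ a ∈ S, φ a ≠ ⊤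

/-- `φ` is a semifinite function on (the graph) `S`: it is not everywhere finite, and
its value at any element `a` of the cone `K⁺` is the supremum of its values at the
elements `b ≤_K a` of the cone where it is finite. -/
def SemifiniteOn (S : Set BW) (φ : BW → ℝ≥0∞) : Prop :=
  (∃ a ∈ S, φ a = ⊤) ∧
  ∀ f : BW →₀ ℝ, NonnegOn S f →
    phiHat φ f =
      ⨆ g ∈ {g : BW →₀ ℝ |
        NonnegOn S g ∧ leK S (kmk S g) (kmk S f) ∧ phiHat φ g ≠ ⊤}, phiHat φ g

/-- A semifinite harmonic function `φ` on `S` is indecomposable if any finite or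
semifinite harmonic function `φ′ ≤ φ` on `S` which does not vanish identically on the
finiteness ideal of `φ` is a constant multiple of `φ` on that ideal. -/
def IndecSemifiniteOn (S : Set BW) (φ : BW → ℝ≥0∞) : Prop :=
  ∀ φ' : BW → ℝ≥0∞, HarmonicOn S φ' →
    (FiniteOn S φ' ∨ SemifiniteOn S φ') →
    (∀ a ∈ S, φ' a ≤ φ a) →
    (∃ a ∈ S, φ a ≠ ⊤ ∧ φ' a ≠ 0) →
    ∃ c : ℝ≥0, ∀ a ∈ S, φ a ≠ ⊤ → φ' a = (c : ℝ≥0∞) * φ a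

end Kcone

end Zigzag

namespace Zigzag

/-- A coideal of the zigzag graph: closed under passing to subwords. -/
def IsCoidealBW (J : Set BW) : Prop := ∀ a ∈ J, ∀ b : BW, b.Sublist a → b ∈ J

/-- A saturated coideal of the zigzag graph: every element has an upper neighbour in
the coideal. -/
def IsSatCoidealBW (J : Set BW) : Prop :=
  IsCoidealBW J ∧ ∀ a ∈ J, ∃ b ∈ J, CoveredBy a b

/-- A primitive saturated coideal: not a union of two strictly smaller saturated
coideals. -/
def IsPrimCoidealBW (J : Set BW) : Prop :=
  IsSatCoidealBW J ∧ ∀ J₁ J₂ : Set BW, IsSatCoidealBW J₁ → IsSatCoidealBW J₂ →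
    J = J₁ ∪ J₂ → J = J₁ ∨ J = J₂


section Aux
open List

/-! ### Alternating words -/

def alt : Bool → ℕ → List Bool
  | _, 0 => []
  | s, n + 1 => s :: alt (!s) n

@[simp] lemma alt_zero (s : Bool) : alt s 0 = [] := rfl
@[simp] lemma alt_succ (s : Bool) (n : ℕ) : alt s (n + 1) = s :: alt (!s) n := rfl

@[simp] lemma length_alt (s : Bool) (n : ℕ) : (alt s n).length = n := by
  induction n generalizing s with
  | zero => rfl
  | succ n ih => simp [ih]

lemma bool_eq_not {x y : Bool} (h : x ≠ y) : y = !x := by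
  cases x <;> cases y <;> simp_all

lemma alt_sublist_succ (s : Bool) (n : ℕ) : alt s n <+ alt s (n + 1) := by
  induction n generalizing s with
  | zero => simp
  | succ n ih => exact List.Sublist.cons₂ _ (ih (!s))

lemma alt_sublist_alt (s : Bool) {n m : ℕ} (h : n ≤ m) : alt s n <+ alt s m := by
  induction h with
  | refl => exact List.Sublist.refl _
  | step _ ih => exact ih.trans (alt_sublist_succ _ _)

lemma sublist_alt (u : List Bool) (s : Bool) : u <+ alt s (2 * u.length) := by
  induction u generalizing s with
  | nil => simp
  | cons x u ih =>
    have h2 : 2 * (x :: u).length = 2 * u.length + 1 + 1 := by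
      simp [List.length_cons]; ring
    rw [h2, alt_succ]
    rcases eq_or_ne x s with rfl | hx
    · exact List.Sublist.cons₂ _ ((ih (!x)).trans (alt_sublist_succ _ _))
    · have hx' : x = !s := bool_eq_not (Ne.symm hx)
      subst hx'
      rw [alt_succ]
      refine List.Sublist.cons _ (List.Sublist.cons₂ _ ?_)
      simpa using ih s

lemma eq_alt_of_chain' {z : List Bool} (h : z.Chain' (· ≠ ·)) :
    z = alt (z.headD true) z.length := by
  induction z with
  | nil => rfl
  | cons x z ih =>
    cases z with
    | nil => rfl
    | cons y z' =>
      have hxy : x ≠ y := (List.isChain_cons_cons.mp h).1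
      have ht := ih (List.isChain_cons_cons.mp h).2
      have hy : y = !x := bool_eq_not hxy
      simp only [List.headD_cons, List.length_cons] at ht ⊢
      rw [alt_succ, ← hy]
      exact congrArg (x :: ·) ht

/-! ### Blocks -/

def blocks : List Bool → List (Bool × ℕ)
  | [] => []
  | x :: xs =>
    match blocks xs with
    | [] => [(x, 1)]
    | (y, n) :: t => if x = y then (y, n + 1) :: t else (x, 1) :: (y, n) :: t

def sgn (a : List Bool) : List Bool := (blocks a).map Prod.fst
def mults (a : List Bool) : List ℕ := (blocks a).map Prod.snd

@[simp] lemma blocks_nil : blocks [] = [] := rfl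

lemma blocks_cons (x : Bool) (v : List Bool) :
    blocks (x :: v) = match blocks v with
      | [] => [(x, 1)]
      | (y, n) :: t => if x = y then (y, n + 1) :: t else (x, 1) :: (y, n) :: t := rfl

lemma blocks_eq_nil {a : List Bool} : blocks a = [] ↔ a = [] := by
  cases a with
  | nil => simp
  | cons x xs =>
    simp only [blocks_cons]
    rcases h : blocks xs with _ | ⟨⟨y, n⟩, t⟩
    · simp
    · by_cases hxy : x = y <;> simp [hxy]

lemma blocks_pos {a : List Bool} : ∀ p ∈ blocks a, 0 < p.2 := by
  induction a with
  | nil => simp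
  | cons x v ih =>
    intro p hp
    rw [blocks_cons] at hp
    rcases h : blocks v with _ | ⟨⟨y, n⟩, t⟩ <;> rw [h] at hp
    · simp at hp; simp [hp]
    · by_cases hxy : x = y
      · simp only [if_pos hxy, List.mem_cons] at hp
        rcases hp with rfl | hp
        · simp
        · exact ih p (by rw [h]; exact List.mem_cons_of_mem _ hp)
      · simp only [if_neg hxy, List.mem_cons] at hp
        rcases hp with rfl | rfl | hp
        · simp
        · exact ih (y, n) (by rw [h]; exact List.mem_cons_self)
        · exact ih p (by rw [h]; exact List.mem_cons_of_mem _ hp)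

lemma sgn_cons (x : Bool) (v : List Bool) :
    sgn (x :: v) = if (sgn v).head? = some x then sgn v else x :: sgn v := by
  unfold sgn
  rw [blocks_cons]
  rcases h : blocks v with _ | ⟨⟨y, n⟩, t⟩
  · simp
  · by_cases hxy : x = y
    · subst hxy; simp
    · simp [hxy, Ne.symm hxy]

@[simp] lemma sgn_nil : sgn [] = [] := rfl

@[simp] lemma sgn_eq_nil {a : List Bool} : sgn a = [] ↔ a = [] := by
  simp [sgn, blocks_eq_nil]

@[simp] lemma length_mults_eq (a : List Bool) : (mults a).length = (sgn a).length := by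
  simp [mults, sgn]

lemma sgn_sublist (a : List Bool) : sgn a <+ a := by
  induction a with
  | nil => simp
  | cons x v ih =>
    rw [sgn_cons]
    split
    · exact ih.trans (List.sublist_cons_self _ _)
    · exact List.Sublist.cons₂ _ ih

lemma sgn_chain' (a : List Bool) : (sgn a).Chain' (· ≠ ·) := by
  induction a with
  | nil => exact List.isChain_nil
  | cons x v ih =>
    rw [sgn_cons]
    split
    · exact ih
    · rename_i h
      refine List.isChain_cons.mpr ⟨fun y hy hxy => h ?_, ih⟩
      rw [Option.mem_def] at hy
      rw [hy, hxy]


/-! ### Piles -/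

def pile : List Bool → List ℕ → List Bool
  | s :: l, n :: ν => List.replicate n s ++ pile l ν
  | _, _ => []

@[simp] lemma pile_nil_left (ν : List ℕ) : pile [] ν = [] := rfl
@[simp] lemma pile_nil_right (l : List Bool) : pile l [] = [] := by cases l <;> rfl
@[simp] lemma pile_cons (s : Bool) (l : List Bool) (n : ℕ) (ν : List ℕ) :
    pile (s :: l) (n :: ν) = List.replicate n s ++ pile l ν := rfl

lemma pile_sgn_mults (a : List Bool) : pile (sgn a) (mults a) = a := by
  induction a with
  | nil => rfl
  | cons x v ih =>
    unfold sgn mults at ih ⊢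
    rcases h : blocks v with _ | ⟨⟨y, n⟩, t⟩
    · have hv : v = [] := blocks_eq_nil.mp h
      subst hv; rfl
    · rw [h] at ih
      by_cases hxy : x = y
      · subst hxy
        have hb : blocks (x :: v) = (x, n + 1) :: t := by rw [blocks_cons, h]; simp
        rw [hb]
        simp only [List.map_cons, pile_cons] at ih ⊢
        rw [List.replicate_succ, List.cons_append, ih]
      · have hb : blocks (x :: v) = (x, 1) :: (y, n) :: t := by rw [blocks_cons, h]; simp [hxy]
        rw [hb]
        simp only [List.map_cons, pile_cons] at ih ⊢
        rw [List.replicate_one, List.singleton_append, ih]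

lemma length_pile : ∀ (l : List Bool) (ν : List ℕ), l.length = ν.length →
    (pile l ν).length = ν.sum
  | [], [], _ => by simp
  | [], _ :: _, h => by simp at h
  | _ :: _, [], h => by simp at h
  | s :: l, n :: ν, h => by
    simp only [pile_cons, List.length_append, List.length_replicate, List.sum_cons]
    rw [length_pile l ν (by simpa using h)]

lemma length_eq_sum_mults (a : List Bool) : a.length = (mults a).sum := by
  conv_lhs => rw [← pile_sgn_mults a]
  rw [length_pile _ _ (length_mults_eq a).symm]

lemma head?_ne_sublist {l w : List Bool} {x : Bool} (h : l <+ x :: w)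
    (hx : l.head? ≠ some x) : l <+ w := by
  cases h with
  | cons _ h => exact h
  | cons_cons _ h => simp at hx

lemma sgn_mono {u v : List Bool} (h : u <+ v) : sgn u <+ sgn v := by
  induction h with
  | slnil => simp
  | cons a h ih =>
    refine ih.trans ?_
    rw [sgn_cons]
    split
    · exact List.Sublist.refl _
    · exact List.sublist_cons_self _ _
  | @cons_cons l₁ l₂ a h ih =>
    rw [sgn_cons, sgn_cons]
    by_cases h1 : (sgn l₁).head? = some a <;> by_cases h2 : (sgn l₂).head? = some a
    · rw [if_pos h1, if_pos h2]; exact ih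
    · rw [if_pos h1, if_neg h2]; exact ih.trans (List.sublist_cons_self _ _)
    · rw [if_neg h1, if_pos h2]
      obtain ⟨tl, htl⟩ : ∃ tl, sgn l₂ = a :: tl := by
        cases hs : sgn l₂ with
        | nil => rw [hs] at h2; simp at h2
        | cons b tl =>
          rw [hs] at h2; simp only [List.head?_cons, Option.some.injEq] at h2
          exact ⟨tl, by rw [h2]⟩
      rw [htl]
      exact List.Sublist.cons₂ _ (head?_ne_sublist (htl ▸ ih) h1)
    · rw [if_neg h1, if_neg h2]; exact List.Sublist.cons₂ _ ih

lemma blocks_replicate_append {s : Bool} {w : List Bool} :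
    ∀ {n : ℕ}, 0 < n → (sgn w).head? ≠ some s →
      blocks (List.replicate n s ++ w) = (s, n) :: blocks w := by
  intro n
  induction n with
  | zero => omega
  | succ n ih =>
    intro _ hw
    rcases Nat.eq_zero_or_pos n with h0 | hpos
    · subst h0
      rw [List.replicate_one, List.singleton_append, blocks_cons]
      rcases h : blocks w with _ | ⟨⟨y, m⟩, t⟩
      · rfl
      · have hys : s ≠ y := by
          intro hsy
          apply hw
          unfold sgn
          rw [h, List.map_cons, List.head?_cons, hsy]
        simp [hys]
    · rw [List.replicate_succ, List.cons_append, blocks_cons, ih hpos hw]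
      simp

lemma blocks_pile : ∀ (l : List Bool) (ν : List ℕ), l.Chain' (· ≠ ·) →
    l.length = ν.length → (∀ n ∈ ν, 0 < n) → blocks (pile l ν) = l.zip ν
  | [], [], _, _, _ => by simp
  | [], _ :: _, _, h, _ => by simp at h
  | _ :: _, [], _, h, _ => by simp at h
  | s :: l, n :: ν, hch, hlen, hpos => by
    rw [pile_cons]
    have hrec := blocks_pile l ν hch.tail (by simpa using hlen)
      (fun m hm => hpos m (List.mem_cons_of_mem _ hm))
    have hhead : (sgn (pile l ν)).head? ≠ some s := by
      unfold sgn
      rw [hrec]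
      cases l with
      | nil => simp
      | cons s2 l' =>
        cases ν with
        | nil => simp at hlen
        | cons n2 ν' =>
          simp only [List.zip_cons_cons, List.map_cons, List.head?_cons]
          have hs : s ≠ s2 := (List.isChain_cons_cons.mp hch).1
          simp [Ne.symm hs]
    rw [blocks_replicate_append (hpos n (List.mem_cons_self)) hhead, hrec]
    rfl

lemma sgn_pile (l : List Bool) (ν : List ℕ) (hch : l.Chain' (· ≠ ·))
    (hlen : l.length = ν.length) (hpos : ∀ n ∈ ν, 0 < n) : sgn (pile l ν) = l := by
  unfold sgn
  rw [blocks_pile l ν hch hlen hpos]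
  exact List.map_fst_zip (le_of_eq hlen)

lemma mults_pile (l : List Bool) (ν : List ℕ) (hch : l.Chain' (· ≠ ·))
    (hlen : l.length = ν.length) (hpos : ∀ n ∈ ν, 0 < n) : mults (pile l ν) = ν := by
  unfold mults
  rw [blocks_pile l ν hch hlen hpos]
  exact List.map_snd_zip (le_of_eq hlen.symm)

lemma pile_mono : ∀ (l : List Bool) {ν ν' : List ℕ},
    List.Forall₂ (· ≤ ·) ν ν' → pile l ν <+ pile l ν'
  | [], _, _, _ => by simp
  | s :: l, _, _, h => by
    cases h with
    | nil => simp
    | cons hab h =>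
      rw [pile_cons, pile_cons]
      exact ((List.replicate_sublist_replicate s).mpr hab).append (pile_mono l h)

lemma forall₂_le_getD {l l' : List ℕ} (h : List.Forall₂ (· ≤ ·) l l') (i : ℕ) :
    l.getD i 0 ≤ l'.getD i 0 := by
  induction h generalizing i with
  | nil => simp
  | cons hab h ih =>
    cases i with
    | zero => simpa using hab
    | succ i => simpa using ih i

lemma forall₂_of_getD {R : ℕ → ℕ → Prop} : ∀ {l l' : List ℕ}, l.length = l'.length →
    (∀ i, i < l.length → R (l.getD i 0) (l'.getD i 0)) → List.Forall₂ R l l' := by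
  intro l
  induction l with
  | nil =>
    intro l' h _
    cases l' with
    | nil => exact List.Forall₂.nil
    | cons b l' => simp at h
  | cons a l ih =>
    intro l' hlen hR
    cases l' with
    | nil => simp at hlen
    | cons b l' =>
      refine List.Forall₂.cons (by simpa using hR 0 (by simp)) (ih (by simpa using hlen) ?_)
      intro i hi
      simpa using hR (i + 1) (by simpa using hi)

lemma head?_replicate_append {k : ℕ} {s : Bool} {w : List Bool} (h : 0 < k) :
    (List.replicate k s ++ w).head? = some s := by
  cases k with
  | zero => omega
  | succ k => rw [List.replicate_succ]; rfl

lemma forall₂_le_of_pile_sublist :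
    ∀ (l : List Bool) (ν ν' : List ℕ), l.Chain' (· ≠ ·) →
      l.length = ν.length → l.length = ν'.length →
      (∀ n ∈ ν, 0 < n) → (∀ n ∈ ν', 0 < n) →
      pile l ν <+ pile l ν' → List.Forall₂ (· ≤ ·) ν ν'
  | [], [], [], _, _, _, _, _, _ => List.Forall₂.nil
  | [], _ :: _, _, _, h, _, _, _, _ => by simp at h
  | [], _, _ :: _, _, _, h, _, _, _ => by simp at h
  | _ :: _, [], _, _, h, _, _, _, _ => by simp at h
  | _ :: _, _, [], _, _, h, _, _, _ => by simp at h
  | s :: l, n :: νt, m :: νt', hch, hlen, hlen', hpos, hpos', h => by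
    cases l with
    | nil =>
      have hνt : νt = [] := by simpa using hlen
      have hνt' : νt' = [] := by simpa using hlen'
      subst hνt; subst hνt'
      simp only [pile_cons, pile_nil_left, List.append_nil] at h
      exact List.Forall₂.cons ((List.replicate_sublist_replicate s).mp h) List.Forall₂.nil
    | cons s2 l2 =>
      obtain ⟨n2, νt2, rfl⟩ : ∃ n2 νt2, νt = n2 :: νt2 := by
        cases νt with
        | nil => simp at hlen
        | cons a b => exact ⟨a, b, rfl⟩
      have hs2 : s ≠ s2 := (List.isChain_cons_cons.mp hch).1
      rw [pile_cons, pile_cons] at h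
      obtain ⟨l₁, l₂, heq, h₁, h₂⟩ := List.sublist_append_iff.mp h
      obtain ⟨j, hj, rfl⟩ := List.sublist_replicate_iff.mp h₁
      rcases Nat.lt_or_ge n j with hnj | hnj
      · exfalso
        have hrepj : List.replicate j s = List.replicate n s ++ List.replicate (j - n) s := by
          rw [← List.replicate_add]; congr 1; omega
        rw [hrepj, List.append_assoc] at heq
        have hu := List.append_cancel_left heq
        have hL : (List.replicate n2 s2 ++ pile l2 νt2).head? = some s2 :=
          head?_replicate_append (hpos n2 (List.mem_cons_of_mem _ (List.mem_cons_self)))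
        have hR : (List.replicate (j - n) s ++ l₂).head? = some s :=
          head?_replicate_append (by omega)
        rw [hu, hR] at hL
        exact hs2 (by simpa using hL)
      · have hrepn : List.replicate n s = List.replicate j s ++ List.replicate (n - j) s := by
          rw [← List.replicate_add]; congr 1; omega
        rw [hrepn, List.append_assoc] at heq
        have hl₂ : l₂ = List.replicate (n - j) s ++ pile (s2 :: l2) (n2 :: νt2) :=
          (List.append_cancel_left heq).symm
        rcases Nat.lt_or_ge j n with hjn | hjn
        · exfalso
          have hl₂' : l₂ = pile (s :: s2 :: l2) ((n - j) :: n2 :: νt2) := by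
            rw [hl₂]; rfl
          have hsgn : sgn l₂ = s :: s2 :: l2 := by
            rw [hl₂']
            refine sgn_pile _ _ hch (by simpa using hlen) ?_
            intro q hq
            rcases List.mem_cons.mp hq with rfl | hq
            · omega
            · exact hpos q (List.mem_cons_of_mem _ hq)
          have hsgn' := sgn_mono h₂
          have hsgn2 : sgn (pile (s2 :: l2) νt') = s2 :: l2 :=
            sgn_pile _ _ (List.isChain_cons_cons.mp hch).2 (by simpa using hlen')
              (fun q hq => hpos' q (List.mem_cons_of_mem _ hq))
          rw [hsgn, hsgn2] at hsgn'
          have := hsgn'.length_le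
          simp at this
        · have hjn' : j = n := by omega
          subst hjn'
          have hl₂' : l₂ = pile (s2 :: l2) (n2 :: νt2) := by
            simpa using hl₂
          rw [hl₂'] at h₂
          exact List.Forall₂.cons hj
            (forall₂_le_of_pile_sublist (s2 :: l2) (n2 :: νt2) νt' hch.tail
              (by simpa using hlen) (by simpa using hlen')
              (fun q hq => hpos q (List.mem_cons_of_mem _ hq))
              (fun q hq => hpos' q (List.mem_cons_of_mem _ hq)) h₂)

lemma sublist_pile_shrink (W : ℕ) :
    ∀ (l : List Bool) {ν ν' : List ℕ} (w : List Bool), w.length ≤ W →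
      List.Forall₂ (fun a b => a ≤ b ∨ W ≤ b) ν ν' → w <+ pile l ν → w <+ pile l ν'
  | [], ν, ν', w, _, _, h => by
    simp only [pile_nil_left] at h
    simpa using h
  | s :: l, _, _, w, hW, hf, h => by
    cases hf with
    | nil => simpa using h
    | @cons a b νt νt' hab hf =>
      rw [pile_cons] at h ⊢
      obtain ⟨w1, w2, rfl, h1, h2⟩ := List.sublist_append_iff.mp h
      have hw2 : w2.length ≤ W := by
        simp only [List.length_append] at hW
        omega
      refine List.Sublist.append ?_ (sublist_pile_shrink W l w2 hw2 hf h2)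
      rcases hab with hab | hab
      · exact h1.trans ((List.replicate_sublist_replicate s).mpr hab)
      · obtain ⟨j, hj, rfl⟩ := List.sublist_replicate_iff.mp h1
        refine (List.replicate_sublist_replicate s).mpr ?_
        have hjW : j ≤ W := by
          simp only [List.length_append, List.length_replicate] at hW
          omega
        omega

lemma exists_cover' : ∀ {b a : List Bool}, a <+ b → a.length < b.length →
    ∃ c, a <+ c ∧ c <+ b ∧ c.length = a.length + 1 := by
  intro b
  induction b with
  | nil => intro a h hl; simp at hl
  | cons x b ih =>
    intro a h hl
    cases h with
    | cons _ h' =>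
      rcases Nat.lt_or_ge a.length b.length with h2 | h2
      · obtain ⟨c, hc1, hc2, hc3⟩ := ih h' h2
        exact ⟨c, hc1, hc2.trans (List.sublist_cons_self _ _), hc3⟩
      · have hab : a = b := h'.eq_of_length_le h2
        subst hab
        exact ⟨x :: a, List.sublist_cons_self _ _, List.Sublist.refl _, rfl⟩
    | cons_cons _ h' =>
      obtain ⟨c, hc1, hc2, hc3⟩ := ih h' (by simpa using hl)
      exact ⟨x :: c, List.Sublist.cons₂ _ hc1, List.Sublist.cons₂ _ hc2, by simp [hc3]⟩


/-! ### clWord as a pile -/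

def imul (N : ℕ) (cs : List (Bool × ℕ∞)) : List ℕ :=
  cs.map fun c => if c.2 = ⊤ then N else c.2.toNat

lemma clWord_eq_pile (cs : List (Bool × ℕ∞)) (N : ℕ) :
    clWord cs N = pile (cs.map Prod.fst) (imul N cs) := by
  induction cs with
  | nil => rfl
  | cons c cs ih =>
    have h1 : clWord (c :: cs) N
        = List.replicate (if c.2 = ⊤ then N else c.2.toNat) c.1 ++ clWord cs N := rfl
    rw [h1, ih]; rfl

@[simp] lemma length_imul (N : ℕ) (cs : List (Bool × ℕ∞)) :
    (imul N cs).length = cs.length := by simp [imul]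

lemma imul_pos {cs : List (Bool × ℕ∞)} (hpos : ∀ c ∈ cs, c.2 ≠ 0) {N : ℕ} (hN : 1 ≤ N) :
    ∀ n ∈ imul N cs, 0 < n := by
  intro n hn
  simp only [imul, List.mem_map] at hn
  obtain ⟨c, hc, rfl⟩ := hn
  split
  · omega
  · rename_i htop
    have h0 := hpos c hc
    lift c.2 to ℕ using htop with m hm
    simp only [ENat.toNat_coe]
    exact Nat.pos_of_ne_zero (by exact_mod_cast h0)

lemma imul_getD {cs : List (Bool × ℕ∞)} {N i : ℕ} (hi : i < cs.length) :
    (imul N cs).getD i 0 = if (cs[i]'hi).2 = ⊤ then N else (cs[i]'hi).2.toNat := by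
  rw [List.getD_eq_getElem _ _ (by simpa using hi)]
  simp [imul]

lemma forall₂_map_same {α : Type*} {R : ℕ → ℕ → Prop} (f g : α → ℕ) {l : List α}
    (h : ∀ c ∈ l, R (f c) (g c)) : List.Forall₂ R (l.map f) (l.map g) := by
  induction l with
  | nil => exact List.Forall₂.nil
  | cons c l ih =>
    exact List.Forall₂.cons (h c (List.mem_cons_self))
      (ih fun d hd => h d (List.mem_cons_of_mem _ hd))

lemma clWord_mono_N {cs : List (Bool × ℕ∞)} {N N' : ℕ} (h : N ≤ N') :
    clWord cs N <+ clWord cs N' := by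
  rw [clWord_eq_pile, clWord_eq_pile]
  refine pile_mono _ (forall₂_map_same _ _ ?_)
  intro c _
  split <;> omega

lemma alternating_fst_chain' {cs : List (Bool × ℕ∞)}
    (h : cs.Chain' fun c d => c.1 ≠ d.1) : (cs.map Prod.fst).Chain' (· ≠ ·) :=
  (List.isChain_map Prod.fst).mpr h

lemma sgn_clWord {cs : List (Bool × ℕ∞)} (hch : cs.Chain' fun c d => c.1 ≠ d.1)
    (hpos : ∀ c ∈ cs, c.2 ≠ 0) {N : ℕ} (hN : 1 ≤ N) :
    sgn (clWord cs N) = cs.map Prod.fst := by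
  rw [clWord_eq_pile]
  exact sgn_pile _ _ (alternating_fst_chain' hch) (by simp) (imul_pos hpos hN)

lemma mults_clWord {cs : List (Bool × ℕ∞)} (hch : cs.Chain' fun c d => c.1 ≠ d.1)
    (hpos : ∀ c ∈ cs, c.2 ≠ 0) {N : ℕ} (hN : 1 ≤ N) :
    mults (clWord cs N) = imul N cs := by
  rw [clWord_eq_pile]
  exact mults_pile _ _ (alternating_fst_chain' hch) (by simp) (imul_pos hpos hN)

lemma le_sum_of_mem {l : List ℕ} {x : ℕ} (h : x ∈ l) : x ≤ l.sum := by
  induction l with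
  | nil => simp at h
  | cons a l ih =>
    rcases List.mem_cons.mp h with rfl | h
    · simp
    · have := ih h
      simp only [List.sum_cons]
      omega

lemma getD_le_sum (l : List ℕ) (i : ℕ) : l.getD i 0 ≤ l.sum := by
  rcases Nat.lt_or_ge i l.length with hi | hi
  · rw [List.getD_eq_getElem _ _ hi]
    exact le_sum_of_mem (List.getElem_mem _)
  · rw [List.getD_eq_default _ _ hi]
    omega

lemma le_length_clWord (t : Template) (N : ℕ) : N ≤ (clWord t.clusters N).length := by
  rw [clWord_eq_pile, length_pile _ _ (by simp)]
  obtain ⟨c, hc, hc2⟩ := t.hasInf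
  refine le_sum_of_mem ?_
  simp only [imul, List.mem_map]
  exact ⟨c, hc, by rw [hc2]; simp⟩

lemma Zcl_coideal (cs : List (Bool × ℕ∞)) : IsCoidealBW (Zcl cs) :=
  fun _ ha b hb => by obtain ⟨N, hN⟩ := ha; exact ⟨N, hb.trans hN⟩

lemma clWord_mem_Zcl (cs : List (Bool × ℕ∞)) (N : ℕ) : clWord cs N ∈ Zcl cs :=
  ⟨N, List.Sublist.refl _⟩

lemma Zt_sat (t : Template) : IsSatCoidealBW (Zt t) := by
  refine ⟨Zcl_coideal _, ?_⟩
  rintro a ⟨N, ha⟩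
  set N' := max N (a.length + 1) with hN'
  have h1 : a <+ clWord t.clusters N' := ha.trans (clWord_mono_N (le_max_left _ _))
  have h2 : a.length < (clWord t.clusters N').length :=
    lt_of_lt_of_le (by omega) (le_trans (le_max_right N (a.length + 1)) (le_length_clWord t N'))
  obtain ⟨c, hc1, hc2, hc3⟩ := exists_cover' h1 h2
  exact ⟨c, ⟨N', hc2⟩, hc1, hc3⟩

end Aux


section Aux2
open List

lemma sgn_length_bound {J : Set BW} (hco : IsCoidealBW J) {w₀ : BW} (hw₀ : w₀ ∉ J) :
    ∀ v ∈ J, (sgn v).length ≤ 2 * w₀.length := by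
  intro v hv
  by_contra hlen
  push_neg at hlen
  set z := sgn v with hz
  have hzalt : z = alt (z.headD true) z.length := eq_alt_of_chain' (sgn_chain' v)
  have h1 : w₀ <+ alt (z.headD true) (2 * w₀.length) := sublist_alt _ _
  have h2 : alt (z.headD true) (2 * w₀.length) <+ z := by
    conv_rhs => rw [hzalt]
    exact alt_sublist_alt _ (le_of_lt hlen)
  exact hw₀ (hco v hv w₀ ((h1.trans h2).trans (sgn_sublist v)))

lemma exists_basis {J : Set BW} (hJ : IsCoidealBW J) :
    ∃ F : Finset BW, (∀ w ∈ F, w ∉ J) ∧ ∀ u, u ∉ J ↔ ∃ w ∈ F, w <+ u := by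
  classical
  set Min : Set BW := {w | w ∉ J ∧ ∀ u, u ∉ J → u <+ w → u = w} with hMin
  have hmin_of : ∀ n, ∀ w : BW, w.length ≤ n → w ∉ J → ∃ v ∈ Min, v <+ w := by
    intro n
    induction n with
    | zero =>
      intro w hw hnJ
      have hw0 : w = [] := List.length_eq_zero_iff.mp (Nat.le_zero.mp hw)
      subst hw0
      exact ⟨[], ⟨hnJ, fun u _ hsub => List.sublist_nil.mp hsub⟩, List.Sublist.refl _⟩
    | succ n ih =>
      intro w hw hnJ
      by_cases hM : ∀ u, u ∉ J → u <+ w → u = w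
      · exact ⟨w, ⟨hnJ, hM⟩, List.Sublist.refl _⟩
      · push_neg at hM
        obtain ⟨u, hu, hsub, hne⟩ := hM
        have hlt : u.length < w.length :=
          lt_of_le_of_ne hsub.length_le (fun h => hne (hsub.eq_of_length h))
        obtain ⟨v, hv1, hv2⟩ := ih u (by omega) hu
        exact ⟨v, hv1, hv2.trans hsub⟩
  have hfin : Min.Finite := by
    by_contra hinf
    let f := Set.Infinite.natEmbedding Min hinf
    haveI : IsRefl Bool (· = ·) := ⟨fun _ => rfl⟩
    haveI : IsTrans Bool (· = ·) := ⟨fun _ _ _ h1 h2 => h1.trans h2⟩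
    have pwoB : (Set.univ : Set Bool).PartiallyWellOrderedOn (· = ·) :=
      Set.finite_univ.partiallyWellOrderedOn
    have pwoL := pwoB.partiallyWellOrderedOn_sublistForall₂
    obtain ⟨i, j, hij, hsf⟩ := pwoL.exists_lt (f := fun n => (f n : BW)) (fun n x _ => Set.mem_univ x)
    have hsub : (f i : BW) <+ (f j : BW) := by
      obtain ⟨l, hl1, hl2⟩ := List.sublistForall₂_iff.mp hsf
      rw [List.forall₂_eq_eq_eq] at hl1
      rwa [hl1]
    have heq : (f i : BW) = (f j : BW) := (f j).2.2 _ (f i).2.1 hsub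
    exact absurd (f.injective (Subtype.ext heq)) (Nat.ne_of_lt hij)
  refine ⟨hfin.toFinset, ?_, ?_⟩
  · intro w hw
    exact ((Set.Finite.mem_toFinset hfin).mp hw).1
  · intro u
    constructor
    · intro hu
      obtain ⟨v, hv, hsub⟩ := hmin_of u.length u le_rfl hu
      exact ⟨v, (Set.Finite.mem_toFinset hfin).mpr hv, hsub⟩
    · rintro ⟨w, hw, hsub⟩ hu
      exact ((Set.Finite.mem_toFinset hfin).mp hw).1 (hJ u hu w hsub)

/-! ### Bumping a template -/

def bup (L : ℕ) (cs : List (Bool × ℕ∞)) : List (Bool × ℕ∞) :=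
  cs.map fun c => (c.1, if (L : ℕ∞) ≤ c.2 then (⊤ : ℕ∞) else c.2)

def bumpT (L : ℕ) (t : Template) : Template where
  clusters := bup L t.clusters
  ne := by
    have := t.ne
    simp only [bup, ne_eq, List.map_eq_nil_iff]
    exact this
  pos := by
    intro c hc
    simp only [bup, List.mem_map] at hc
    obtain ⟨d, hd, rfl⟩ := hc
    dsimp only
    split
    · simp
    · exact t.pos d hd
  alternating := by
    unfold bup
    exact (List.isChain_map _).mpr t.alternating
  hasInf := by
    obtain ⟨c, hc, hc2⟩ := t.hasInf
    refine ⟨(c.1, if (L : ℕ∞) ≤ c.2 then (⊤ : ℕ∞) else c.2), List.mem_map_of_mem hc, ?_⟩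
    rw [hc2]
    simp

@[simp] lemma bup_map_fst (L : ℕ) (cs : List (Bool × ℕ∞)) :
    (bup L cs).map Prod.fst = cs.map Prod.fst := by
  simp [bup, Function.comp]

lemma Zcl_subset_bup (L : ℕ) {cs : List (Bool × ℕ∞)} : Zcl cs ⊆ Zcl (bup L cs) := by
  rintro a ⟨N, hN⟩
  set M := N + (cs.map fun c => c.2.toNat).sum with hM
  refine ⟨M, hN.trans ?_⟩
  rw [clWord_eq_pile, clWord_eq_pile, bup_map_fst]
  have him : imul M (bup L cs) = cs.map fun c =>
      if (if (L : ℕ∞) ≤ c.2 then (⊤ : ℕ∞) else c.2) = ⊤ then M else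
        (if (L : ℕ∞) ≤ c.2 then (⊤ : ℕ∞) else c.2).toNat := by
    simp [imul, bup, Function.comp]
  rw [him]
  refine pile_mono _ (forall₂_map_same _ _ ?_)
  rintro ⟨cb, cm⟩ hc
  have hsum : ((cb, cm).2).toNat ≤ (cs.map fun c => c.2.toNat).sum :=
    le_sum_of_mem (List.mem_map_of_mem hc)
  dsimp only at hsum ⊢
  rcases eq_or_ne cm ⊤ with htop | htop
  · subst htop
    simp
    omega
  · lift cm to ℕ using htop with m hm
    rw [ENat.toNat_coe] at hsum
    have hne : ((m : ℕ∞)) ≠ ⊤ := by simp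
    by_cases hL : (L : ℕ∞) ≤ (m : ℕ∞)
    · rw [if_neg hne, ENat.toNat_coe, if_pos hL, if_pos rfl]
      omega
    · rw [if_neg hne, if_neg hL, if_neg hne]

lemma shrink_clWord {L : ℕ} {cs : List (Bool × ℕ∞)} {w : BW} (hw : w.length < L)
    {N : ℕ} (h : w <+ clWord (bup L cs) N) :
    w <+ clWord cs (N + (cs.map fun c => c.2.toNat).sum) := by
  set M := N + (cs.map fun c => c.2.toNat).sum with hM
  rw [clWord_eq_pile, bup_map_fst] at h
  rw [clWord_eq_pile]
  refine sublist_pile_shrink w.length _ w le_rfl ?_ h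
  have him : imul N (bup L cs) = cs.map fun c =>
      if (if (L : ℕ∞) ≤ c.2 then (⊤ : ℕ∞) else c.2) = ⊤ then N else
        (if (L : ℕ∞) ≤ c.2 then (⊤ : ℕ∞) else c.2).toNat := by
    simp [imul, bup, Function.comp]
  rw [him]
  refine forall₂_map_same _ _ ?_
  rintro ⟨cb, cm⟩ _
  dsimp only
  rcases eq_or_ne cm ⊤ with htop | htop
  · subst htop
    left
    simp
    omega
  · lift cm to ℕ using htop with m hm
    have hne : ((m : ℕ∞)) ≠ ⊤ := by simp
    by_cases hL : (L : ℕ∞) ≤ (m : ℕ∞)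
    · right
      rw [if_neg hne, ENat.toNat_coe]
      have hLm : L ≤ m := by exact_mod_cast hL
      omega
    · left
      rw [if_neg hL, if_neg hne, if_neg hne]

/-! ### Finiteness of the candidate templates -/

lemma template_ext {t t' : Template} (h : t.clusters = t'.clusters) : t = t' := by
  cases t; cases t'
  cases h
  rfl

lemma finite_bounded_lists {α : Type*} {s : Set α} (hs : s.Finite) :
    ∀ n : ℕ, {l : List α | l.length ≤ n ∧ ∀ x ∈ l, x ∈ s}.Finite := by
  intro n
  induction n with
  | zero =>
    refine Set.Finite.subset (Set.finite_singleton []) ?_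
    rintro l ⟨h1, _⟩
    simp [List.length_eq_zero_iff.mp (Nat.le_zero.mp h1)]
  | succ n ih =>
    refine Set.Finite.subset (((hs.image2 (· :: ·) ih)).insert []) ?_
    rintro l ⟨h1, h2⟩
    cases l with
    | nil => exact Set.mem_insert _ _
    | cons x l =>
      refine Set.mem_insert_of_mem _ (Set.mem_image2_of_mem (h2 x (List.mem_cons_self)) ?_)
      exact ⟨by simpa using h1, fun y hy => h2 y (List.mem_cons_of_mem _ hy)⟩

lemma finite_enat_ball (L : ℕ) : {m : ℕ∞ | m = ⊤ ∨ m < (L : ℕ∞)}.Finite := by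
  refine Set.Finite.subset (((Set.finite_Iio L).image (fun k : ℕ => (k : ℕ∞))).insert ⊤) ?_
  rintro m (rfl | hm)
  · exact Set.mem_insert _ _
  · have hm' : m ≠ ⊤ := ne_top_of_lt hm
    lift m to ℕ using hm' with k hk
    exact Set.mem_insert_of_mem _ ⟨k, by exact_mod_cast hm, rfl⟩

lemma finite_TT (B L : ℕ) :
    {t : Template | t.clusters.length ≤ B ∧
      ∀ c ∈ t.clusters, c.2 = ⊤ ∨ c.2 < (L : ℕ∞)}.Finite := by
  have hset : ({c : Bool × ℕ∞ | c.2 = ⊤ ∨ c.2 < (L : ℕ∞)}).Finite := by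
    refine Set.Finite.subset ((Set.finite_univ.prod (finite_enat_ball L))) ?_
    intro c hc
    exact ⟨trivial, hc⟩
  have hlists := finite_bounded_lists hset B
  refine Set.Finite.of_finite_image (f := Template.clusters) (hlists.subset ?_) ?_
  · rintro l ⟨t, ht, rfl⟩
    exact ⟨ht.1, ht.2⟩
  · intro t _ t' _ h
    exact template_ext h

end Aux2


section Aux3
open List

lemma exists_template (J : Set BW) (hco : IsCoidealBW J)
    (hsat : ∀ a ∈ J, ∃ b ∈ J, CoveredBy a b) (B : ℕ)
    (hB : ∀ v ∈ J, (sgn v).length ≤ B) {a : BW} (ha : a ∈ J) :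
    ∃ t : Template, a ∈ Zt t ∧ Zt t ⊆ J ∧ t.clusters.length ≤ B := by
  classical
  have step : ∀ p : {b : BW // b ∈ J}, ∃ q : {b : BW // b ∈ J}, CoveredBy p.1 q.1 := by
    rintro ⟨b, hb⟩
    obtain ⟨c, hc, hcov⟩ := hsat b hb
    exact ⟨⟨c, hc⟩, hcov⟩
  choose f hf using step
  set A : ℕ → BW := fun n => (f^[n] ⟨a, ha⟩ : {b : BW // b ∈ J}).1 with hA
  have hmem : ∀ n, A n ∈ J := fun n => (f^[n] ⟨a, ha⟩).2
  have hA0 : A 0 = a := rfl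
  have hcov : ∀ n, CoveredBy (A n) (A (n + 1)) := by
    intro n
    have hit : f^[n + 1] (⟨a, ha⟩ : {b : BW // b ∈ J}) = f (f^[n] ⟨a, ha⟩) :=
      Function.iterate_succ_apply' f n _
    simp only [hA]
    rw [hit]
    exact hf _
  have hmono : ∀ {n n' : ℕ}, n ≤ n' → A n <+ A n' := by
    intro n n' h
    induction h with
    | refl => exact List.Sublist.refl _
    | step h ih => exact ih.trans (hcov _).1
  have hlen : ∀ n, (A n).length = a.length + n := by
    intro n
    induction n with
    | zero => simp [hA0]
    | succ n ih => rw [(hcov n).2, ih]; omega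
  -- stabilisation of the sign pattern
  have hbddrange : B ∈ upperBounds (Set.range fun n => (sgn (A n)).length) := by
    rintro x ⟨n, rfl⟩
    exact hB _ (hmem n)
  set K := sSup (Set.range fun n => (sgn (A n)).length) with hK
  have hKmem := Nat.sSup_mem (Set.range_nonempty fun n => (sgn (A n)).length)
    ⟨B, hbddrange⟩
  obtain ⟨n₁, hn₁⟩ := hKmem
  have hn₁' : (sgn (A n₁)).length = K := by rw [hK]; exact hn₁
  have hle : ∀ n, (sgn (A n)).length ≤ K := fun n => le_csSup ⟨B, hbddrange⟩ ⟨n, rfl⟩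
  set n₀ := n₁ + 1 with hn₀
  have hstab : ∀ n, n₀ ≤ n → sgn (A n) = sgn (A n₀) := by
    intro n hn
    have h1 : sgn (A n₀) <+ sgn (A n) := sgn_mono (hmono hn)
    have h2 : sgn (A n₁) <+ sgn (A n₀) := sgn_mono (hmono (Nat.le_succ _))
    have e1 : (sgn (A n₀)).length = K :=
      le_antisymm (hle n₀) (by rw [← hn₁']; exact h2.length_le)
    have e2 : (sgn (A n)).length = K :=
      le_antisymm (hle n) (by rw [← e1]; exact h1.length_le)
    exact (h1.eq_of_length (by rw [e1, e2])).symm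
  set σ : List Bool := sgn (A n₀) with hσ
  set k := σ.length with hk
  have hσch : σ.Chain' (· ≠ ·) := sgn_chain' _
  have hσne : σ ≠ [] := by
    have hAne : A n₀ ≠ [] := by
      intro h0
      have hl := hlen n₀
      rw [h0] at hl
      simp only [List.length_nil] at hl
      omega
    simpa [hσ, sgn_eq_nil] using hAne
  -- multiplicity sequences
  set g : ℕ → List ℕ := fun n => mults (A (n₀ + n)) with hg
  have hsgng : ∀ n, sgn (A (n₀ + n)) = σ := fun n => hstab _ (by omega)
  have hglen : ∀ n, (g n).length = k := by
    intro n
    simp only [hg]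
    rw [length_mults_eq, hsgng n]
  have hgpos : ∀ n, ∀ m ∈ g n, 0 < m := by
    intro n m hm
    simp only [hg, mults, List.mem_map] at hm
    obtain ⟨p, hp, rfl⟩ := hm
    exact blocks_pos p hp
  have hpileA : ∀ n, pile σ (g n) = A (n₀ + n) := by
    intro n
    rw [← hsgng n]
    exact pile_sgn_mults _
  have hgmono : ∀ {n n' : ℕ}, n ≤ n' → List.Forall₂ (· ≤ ·) (g n) (g n') := by
    intro n n' h
    refine forall₂_le_of_pile_sublist σ _ _ hσch ?_ ?_ (hgpos n) (hgpos n') ?_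
    · rw [hglen n]
    · rw [hglen n']
    · rw [hpileA, hpileA]; exact hmono (by omega)
  set gi : ℕ → ℕ → ℕ := fun i n => (g n).getD i 0 with hgi
  have higmono : ∀ (i : ℕ) {n n' : ℕ}, n ≤ n' → gi i n ≤ gi i n' :=
    fun i {n n'} h => forall₂_le_getD (hgmono h) i
  set Bdd : ℕ → Prop := fun i => ∃ C, ∀ n, gi i n ≤ C with hBdd
  set μ : ℕ → ℕ∞ :=
    fun i => if h : Bdd i then ((sSup (Set.range (gi i)) : ℕ) : ℕ∞) else ⊤ with hμ
  have hμtop : ∀ i, ¬ Bdd i → μ i = ⊤ := by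
    intro i h
    simp only [hμ]
    exact dif_neg h
  have hμcoe : ∀ i, Bdd i → μ i = ((sSup (Set.range (gi i)) : ℕ) : ℕ∞) := by
    intro i h
    simp only [hμ]
    exact dif_pos h
  have hμne : ∀ i, Bdd i → μ i ≠ ⊤ := by
    intro i h
    rw [hμcoe i h]
    simp
  have hev : ∀ N i : ℕ, ∃ m, ∀ n, m ≤ n →
      (Bdd i → (gi i n : ℕ∞) = μ i) ∧ (¬ Bdd i → N ≤ gi i n) := by
    intro N i
    by_cases h : Bdd i
    · have hbd : BddAbove (Set.range (gi i)) := by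
        obtain ⟨C, hC⟩ := h
        exact ⟨C, by rintro x ⟨n, rfl⟩; exact hC n⟩
      obtain ⟨m, hm⟩ := Nat.sSup_mem (Set.range_nonempty (gi i)) hbd
      refine ⟨m, fun n hn => ⟨fun _ => ?_, fun h' => absurd h h'⟩⟩
      have h1 : gi i n ≤ sSup (Set.range (gi i)) := le_csSup hbd ⟨n, rfl⟩
      have h2 : sSup (Set.range (gi i)) ≤ gi i n := by
        rw [← hm]
        exact higmono i hn
      rw [hμcoe i h]
      exact_mod_cast le_antisymm h1 h2
    · have h' := h
      simp only [hBdd] at h'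
      push_neg at h'
      obtain ⟨m, hm⟩ := h' N
      exact ⟨m, fun n hn =>
        ⟨fun hb => absurd hb h, fun _ => le_trans (le_of_lt hm) (higmono i hn)⟩⟩
  -- the template
  set mlist : List ℕ∞ := (List.range k).map μ with hmlist
  have hmlen : mlist.length = k := by simp [hmlist]
  set cs := σ.zip mlist with hcs
  have hcslen : cs.length = k := by
    rw [hcs, List.length_zip, hmlen, ← hk]
    exact min_self _
  have hcsfst : cs.map Prod.fst = σ := by
    rw [hcs]
    exact List.map_fst_zip (by rw [hmlen, ← hk])
  have hcsget : ∀ i (hi : i < cs.length), (cs[i]'hi).2 = μ i := by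
    intro i hi
    simp [hcs, List.getElem_zip, hmlist, List.getElem_map, List.getElem_range]
  have hμpos : ∀ i, i < k → μ i ≠ 0 := by
    intro i hi
    have hlen0 : i < (g 0).length := by rw [hglen]; exact hi
    have h1 : 0 < gi i 0 := by
      simp only [hgi]
      rw [List.getD_eq_getElem _ _ hlen0]
      exact hgpos 0 _ (List.getElem_mem _)
    by_cases hb : Bdd i
    · rw [hμcoe i hb]
      have h2 : gi i 0 ≤ sSup (Set.range (gi i)) := by
        obtain ⟨C, hC⟩ := hb
        exact le_csSup ⟨C, by rintro x ⟨n, rfl⟩; exact hC n⟩ ⟨0, rfl⟩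
      exact Nat.cast_ne_zero.mpr (by omega)
    · rw [hμtop i hb]
      simp
  have hInf : ∃ i, i < k ∧ ¬ Bdd i := by
    by_contra hcon
    push_neg at hcon
    set C := (Finset.range k).sup (fun i => if h : Bdd i then Classical.choose h else 0)
      with hC
    have hboundC : ∀ n, ∀ x ∈ g n, x ≤ C := by
      intro n x hx
      obtain ⟨⟨i, hilen⟩, rfl⟩ := List.mem_iff_get.mp hx
      have hik : i < k := by rw [← hglen n]; exact hilen
      have hb := hcon i hik
      have hgix : (g n).get ⟨i, hilen⟩ = gi i n := by
        simp only [hgi]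
        rw [List.getD_eq_getElem _ _ hilen, List.get_eq_getElem]
      rw [hgix]
      calc gi i n ≤ Classical.choose hb := Classical.choose_spec hb n
        _ ≤ C := by
            have hle3 : (if h : Bdd i then Classical.choose h else 0) ≤ C :=
              Finset.le_sup (f := fun i => if h : Bdd i then Classical.choose h else 0)
                (Finset.mem_range.mpr hik)
            rwa [dif_pos hb] at hle3
    have hlb : ∀ n, (A (n₀ + n)).length ≤ k * C := by
      intro n
      have h1 : (A (n₀ + n)).length = (g n).sum := by
        rw [← hpileA n, length_pile σ (g n) (by rw [hglen n])]
      rw [h1]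
      calc (g n).sum ≤ (g n).length • C := List.sum_le_card_nsmul _ _ (hboundC n)
        _ = k * C := by rw [hglen n, smul_eq_mul]
    have hcontr := hlb (k * C + 1)
    rw [hlen] at hcontr
    omega
  obtain ⟨i₀, hi₀k, hi₀⟩ := hInf
  refine ⟨⟨cs, ?_, ?_, ?_, ?_⟩, ?_, ?_, ?_⟩
  · -- nonempty
    intro h0
    apply hσne
    rw [h0] at hcslen
    simp only [List.length_nil] at hcslen
    have hσ0 : σ.length = 0 := by rw [← hk]; omega
    exact List.length_eq_zero_iff.mp hσ0
  · -- positive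
    rintro ⟨cb, cm⟩ hc
    have h2 : cm ∈ mlist := (List.of_mem_zip (by rw [← hcs]; exact hc)).2
    rw [hmlist] at h2
    simp only [List.mem_map, List.mem_range] at h2
    obtain ⟨i, hik, rfl⟩ := h2
    exact hμpos i hik
  · -- alternating
    have h1 : (cs.map Prod.fst).Chain' (· ≠ ·) := by rw [hcsfst]; exact hσch
    exact (List.isChain_map Prod.fst).mp h1
  · -- has an infinite cluster
    have hi₀' : i₀ < cs.length := by rw [hcslen]; exact hi₀k
    refine ⟨cs[i₀]'hi₀', List.getElem_mem _, ?_⟩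
    rw [hcsget i₀ hi₀']
    exact hμtop i₀ hi₀
  · -- a ∈ Zt t
    refine ⟨(g 0).sum, ?_⟩
    have h1 : a <+ A n₀ := by rw [← hA0]; exact hmono (Nat.zero_le _)
    refine h1.trans ?_
    have h2 : A n₀ = pile σ (g 0) := by
      have := hpileA 0
      rw [Nat.add_zero] at this
      exact this.symm
    rw [h2]
    show pile σ (g 0) <+ clWord cs (g 0).sum
    rw [clWord_eq_pile, hcsfst]
    refine pile_mono _ (forall₂_of_getD ?_ ?_)
    · rw [hglen, length_imul, hcslen]
    · intro i hi
      have hik : i < k := by rw [← hglen 0]; exact hi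
      have hic : i < cs.length := by rw [hcslen]; exact hik
      rw [imul_getD hic, hcsget i hic]
      by_cases hb : Bdd i
      · rw [if_neg (hμne i hb)]
        rw [hμcoe i hb, ENat.toNat_coe]
        obtain ⟨C, hC⟩ := hb
        exact le_csSup ⟨C, by rintro x ⟨n, rfl⟩; exact hC n⟩ ⟨0, rfl⟩
      · rw [if_pos (hμtop i hb)]
        exact getD_le_sum _ _
  · -- Zt t ⊆ J
    rintro u ⟨N, hu⟩
    choose M hM using hev N
    set n' := (Finset.range k).sup M with hn'
    have hMle : ∀ i, i < k → M i ≤ n' := fun i hik =>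
      Finset.le_sup (Finset.mem_range.mpr hik)
    have hclA : clWord cs N <+ A (n₀ + n') := by
      rw [clWord_eq_pile, hcsfst, ← hpileA n']
      refine pile_mono _ (forall₂_of_getD ?_ ?_)
      · rw [length_imul, hcslen, hglen]
      · intro i hi
        rw [length_imul, hcslen] at hi
        have hic : i < cs.length := by rw [hcslen]; exact hi
        rw [imul_getD hic, hcsget i hic]
        by_cases hb : Bdd i
        · rw [if_neg (hμne i hb)]
          have he := (hM i n' (hMle i hi)).1 hb
          rw [hμcoe i hb] at he
          have h3 : gi i n' = sSup (Set.range (gi i)) := by exact_mod_cast he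
          rw [hμcoe i hb, ENat.toNat_coe, ← h3]
        · rw [if_pos (hμtop i hb)]
          exact (hM i n' (hMle i hi)).2 hb
    exact hco _ (hmem (n₀ + n')) u (hu.trans hclA)
  · -- size bound
    show cs.length ≤ B
    rw [hcslen, hk]
    exact hB _ (hmem n₀)

end Aux3


section Aux4
open List

lemma map_fst_sublist_of_Zt_subset {t t' : Template} (h : Zt t ⊆ Zt t') :
    t.clusters.map Prod.fst <+ t'.clusters.map Prod.fst := by
  obtain ⟨N, hN⟩ := h ⟨1, List.Sublist.refl _⟩
  have h2 : clWord t.clusters 1 <+ clWord t'.clusters (max N 1) :=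
    hN.trans (clWord_mono_N (le_max_left _ _))
  have h3 := sgn_mono h2
  rwa [sgn_clWord t.alternating t.pos le_rfl,
    sgn_clWord t'.alternating t'.pos (le_max_right N 1)] at h3

lemma forall₂_imul_of_Zt_subset {t t' : Template} (h : Zt t ⊆ Zt t')
    (hfst : t.clusters.map Prod.fst = t'.clusters.map Prod.fst) {N : ℕ} (hN : 1 ≤ N) :
    ∃ N', 1 ≤ N' ∧ List.Forall₂ (· ≤ ·) (imul N t.clusters) (imul N' t'.clusters) := by
  have hlen12 : t.clusters.length = t'.clusters.length := by
    have := congrArg List.length hfst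
    simpa using this
  obtain ⟨N₁, hN₁⟩ := h ⟨N, List.Sublist.refl _⟩
  refine ⟨max N₁ 1, le_max_right _ _, ?_⟩
  have hsub : clWord t.clusters N <+ clWord t'.clusters (max N₁ 1) :=
    hN₁.trans (clWord_mono_N (le_max_left _ _))
  rw [clWord_eq_pile, clWord_eq_pile, ← hfst] at hsub
  exact forall₂_le_of_pile_sublist _ _ _ (alternating_fst_chain' t.alternating)
    (by simp) (by simp [hlen12]) (imul_pos t.pos hN)
    (imul_pos t'.pos (le_max_right N₁ 1)) hsub

lemma snd_le_of_Zt_subsets {t t' : Template} (h1 : Zt t ⊆ Zt t')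
    (hfst : t.clusters.map Prod.fst = t'.clusters.map Prod.fst)
    {i : ℕ} (hi : i < t.clusters.length) (hi' : i < t'.clusters.length) :
    (t.clusters[i]'hi).2 ≤ (t'.clusters[i]'hi').2 := by
  rcases eq_or_ne ((t'.clusters[i]'hi').2) ⊤ with htop | htop
  · rw [htop]; exact le_top
  · have key : ∀ N, 1 ≤ N →
        (if (t.clusters[i]'hi).2 = ⊤ then N else (t.clusters[i]'hi).2.toNat)
          ≤ (t'.clusters[i]'hi').2.toNat := by
      intro N hN
      obtain ⟨N', hN', hf⟩ := forall₂_imul_of_Zt_subset h1 hfst hN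
      have hgd := forall₂_le_getD hf i
      rw [imul_getD hi, imul_getD hi', if_neg htop] at hgd
      exact hgd
    rcases eq_or_ne ((t.clusters[i]'hi).2) ⊤ with htop2 | htop2
    · exfalso
      have hk1 := key ((t'.clusters[i]'hi').2.toNat + 1) (by omega)
      rw [if_pos htop2] at hk1
      omega
    · have hk1 := key 1 le_rfl
      rw [if_neg htop2] at hk1
      lift (t.clusters[i]'hi).2 to ℕ using htop2 with m hm
      lift (t'.clusters[i]'hi').2 to ℕ using htop with m' hm'
      rw [ENat.toNat_coe, ENat.toNat_coe] at hk1
      exact_mod_cast hk1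

lemma list_eq_of_fst_snd : ∀ {l l' : List (Bool × ℕ∞)},
    l.map Prod.fst = l'.map Prod.fst → l.map Prod.snd = l'.map Prod.snd → l = l'
  | [], [], _, _ => rfl
  | [], _ :: _, h, _ => by simp at h
  | _ :: _, [], h, _ => by simp at h
  | a :: l, b :: l', h1, h2 => by
    simp only [List.map_cons, List.cons.injEq] at h1 h2
    rw [list_eq_of_fst_snd h1.2 h2.2, show a = b from Prod.ext h1.1 h2.1]

lemma Zt_injective {t t' : Template} (h : Zt t = Zt t') : t = t' := by
  have h1 : Zt t ⊆ Zt t' := h.le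
  have h2 : Zt t' ⊆ Zt t := h.ge
  have hfst : t.clusters.map Prod.fst = t'.clusters.map Prod.fst := by
    have a1 := map_fst_sublist_of_Zt_subset h1
    have a2 := map_fst_sublist_of_Zt_subset h2
    exact a1.eq_of_length (le_antisymm a1.length_le a2.length_le)
  have hlen12 : t.clusters.length = t'.clusters.length := by
    have := congrArg List.length hfst
    simpa using this
  have hsnd : t.clusters.map Prod.snd = t'.clusters.map Prod.snd := by
    refine List.ext_getElem (by simpa using hlen12) ?_
    intro i hi hi'
    simp only [List.getElem_map]
    have hit : i < t.clusters.length := by simpa using hi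
    have hit' : i < t'.clusters.length := by simpa using hi'
    exact le_antisymm (snd_le_of_Zt_subsets h1 hfst hit hit')
      (snd_le_of_Zt_subsets h2 hfst.symm hit' hit)
  exact template_ext (list_eq_of_fst_snd hfst hsnd)

end Aux4

/-- Every proper nonempty saturated primitive coideal of the zigzag
graph is of the form `Z(t)` for a unique template `t`. -/
theorem primitive_coideal_eq_Zt (J : Set BW) (hJ : IsPrimCoidealBW J)
    (hne : J.Nonempty) (hproper : J ≠ Set.univ) :
    ∃! t : Template, J = Zt t := by
  classical
  obtain ⟨⟨hco, hsat⟩, hprim⟩ := hJ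
  obtain ⟨w₀, hw₀⟩ := (Set.ne_univ_iff_exists_notMem J).mp hproper
  have hB : ∀ v ∈ J, (sgn v).length ≤ 2 * w₀.length := sgn_length_bound hco hw₀
  obtain ⟨F, hF1, hF2⟩ := exists_basis hco
  set L := F.sup List.length + 1 with hL
  have hFlen : ∀ w ∈ F, w.length < L := fun w hw => Nat.lt_succ_of_le (Finset.le_sup hw)
  set B := 2 * w₀.length with hBdef
  set TT : Set Template := {t | Zt t ⊆ J ∧ t.clusters.length ≤ B ∧
    ∀ c ∈ t.clusters, c.2 = ⊤ ∨ c.2 < (L : ℕ∞)} with hTT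
  have hTTfin : TT.Finite := (finite_TT B L).subset (fun t ht => ⟨ht.2.1, ht.2.2⟩)
  have hcover : ∀ a ∈ J, ∃ t ∈ TT, a ∈ Zt t := by
    intro a ha
    obtain ⟨t0, ht0a, ht0J, ht0len⟩ := exists_template J hco hsat B hB ha
    refine ⟨bumpT L t0, ⟨?_, ?_, ?_⟩, ?_⟩
    · rintro u hu
      by_contra hun
      obtain ⟨w, hwF, hwu⟩ := (hF2 u).mp hun
      obtain ⟨N, hN⟩ := hu
      have h1 : List.Sublist w (clWord (bup L t0.clusters) N) := hwu.trans hN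
      have h2 := shrink_clWord (hFlen w hwF) h1
      exact hF1 w hwF (hco _ (ht0J ⟨_, List.Sublist.refl _⟩) w h2)
    · show (bup L t0.clusters).length ≤ B
      simpa [bup] using ht0len
    · intro c hc
      have hc' : c ∈ bup L t0.clusters := hc
      simp only [bup, List.mem_map] at hc'
      obtain ⟨d, hd, rfl⟩ := hc'
      dsimp only
      by_cases hL2 : (L : ℕ∞) ≤ d.2
      · rw [if_pos hL2]
        exact Or.inl rfl
      · rw [if_neg hL2]
        exact Or.inr (not_le.mp hL2)
    · exact Zcl_subset_bup L ht0a
  set ts := hTTfin.toFinset.toList with hts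
  have hmemts : ∀ t : Template, t ∈ ts ↔ t ∈ TT := by
    intro t
    rw [hts, Finset.mem_toList, Set.Finite.mem_toFinset]
  have hJU : ∀ ts' : List Template, J = {a | ∃ t ∈ ts', a ∈ Zt t} → ∃ t, J = Zt t := by
    intro ts'
    induction ts' with
    | nil =>
      intro hJe
      exfalso
      obtain ⟨x, hx⟩ := hne
      rw [hJe] at hx
      simp at hx
    | cons t rest ih =>
      intro hJe
      have hU : IsSatCoidealBW {a | ∃ t' ∈ rest, a ∈ Zt t'} := by
        constructor
        · rintro a ⟨t', ht', hat⟩ b hb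
          exact ⟨t', ht', (Zt_sat t').1 a hat b hb⟩
        · rintro a ⟨t', ht', hat⟩
          obtain ⟨b, hb, hcovb⟩ := (Zt_sat t').2 a hat
          exact ⟨b, ⟨t', ht', hb⟩, hcovb⟩
      have hsplit : J = Zt t ∪ {a | ∃ t' ∈ rest, a ∈ Zt t'} := by
        rw [hJe]
        ext x
        constructor
        · rintro ⟨t', ht', hat⟩
          rcases List.mem_cons.mp ht' with rfl | hmem'
          · exact Or.inl hat
          · exact Or.inr ⟨t', hmem', hat⟩
        · rintro (hx | ⟨t', ht', hat⟩)
          · exact ⟨t, List.mem_cons_self, hx⟩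
          · exact ⟨t', List.mem_cons_of_mem _ ht', hat⟩
      rcases hprim _ _ (Zt_sat t) hU hsplit with h | h
      · exact ⟨t, h⟩
      · exact ih h
  have hJeq : J = {a | ∃ t ∈ ts, a ∈ Zt t} := by
    ext x
    constructor
    · intro hx
      obtain ⟨t, htT, hat⟩ := hcover x hx
      exact ⟨t, (hmemts t).mpr htT, hat⟩
    · rintro ⟨t, hts', hat⟩
      exact ((hmemts t).mp hts').1 hat
  obtain ⟨t, hJt⟩ := hJU ts hJeq
  refine ⟨t, hJt, ?_⟩
  intro t' ht'
  exact Zt_injective (ht'.symm.trans hJt)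

end Zigzag
end

section
/- Let t be a semifinite template and let φ be a strictly positive harmonic function on the graph Z(t). Then φ(λ) = +∞ for every λ ∈ J(t). -/
/-!
Common definitions: the zigzag graph on binary words, templates and their coideals,
zigzag flanges and sections, the functions `F_λ(u)` and `φ_{t,w}`, and harmonic /
semifinite / indecomposable functions on subgraphs of the zigzag graph.
-/

open scoped ENNReal NNReal

namespace Zigzag

section AuxProof

abbrev Blk := List (Bool × ℕ)

/-- the word of a block list -/
def ww (l : Blk) : BW := (l.map fun x => List.replicate x.2 x.1).flatten

def modAt (f : ℕ → ℕ) : Blk → ℕ → Blk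
  | [], _ => []
  | x :: l, 0 => (x.1, f x.2) :: l
  | x :: l, i+1 => x :: modAt f l i

def bump (l : Blk) (i : ℕ) : Blk := modAt (· + 1) l i
def cutAt (l : Blk) (i : ℕ) : Blk := modAt (· - 1) l i

def AltB (l : Blk) : Prop := l.Chain' fun a b => a.1 ≠ b.1
def PosB (l : Blk) : Prop := ∀ x ∈ l, 0 < x.2
def tot (l : Blk) : ℕ := (l.map Prod.snd).sum

@[simp] lemma ww_nil : ww [] = [] := rfl

@[simp] lemma tot_nil : tot [] = 0 := rfl
@[simp] lemma tot_cons (x : Bool × ℕ) (l : Blk) : tot (x :: l) = x.2 + tot l := by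
  simp [tot]

lemma ww_cons (x : Bool × ℕ) (l : Blk) :
    ww (x :: l) = List.replicate x.2 x.1 ++ ww l := by simp [ww]

lemma ww_append (a b : Blk) : ww (a ++ b) = ww a ++ ww b := by simp [ww]

lemma length_ww (l : Blk) : (ww l).length = tot l := by
  induction l with
  | nil => rfl
  | cons x l ih => simp [ww_cons, tot_cons, ih]

lemma length_modAt (f : ℕ → ℕ) : ∀ (l : Blk) (i : ℕ), (modAt f l i).length = l.length
  | [], _ => rfl
  | _ :: l, 0 => rfl
  | _ :: l, i+1 => by simp [modAt, length_modAt f l i]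

lemma map_fst_modAt (f : ℕ → ℕ) : ∀ (l : Blk) (i : ℕ),
    (modAt f l i).map Prod.fst = l.map Prod.fst
  | [], _ => rfl
  | _ :: l, 0 => rfl
  | _ :: l, i+1 => by simp [modAt, map_fst_modAt f l i]

lemma getElem?_modAt_self (f : ℕ → ℕ) : ∀ (l : Blk) (i : ℕ), i < l.length →
    (modAt f l i)[i]? = (l[i]?).map fun x => (x.1, f x.2)
  | x :: l, 0, _ => by simp [modAt]
  | x :: l, i+1, h => by
      simp only [modAt, List.getElem?_cons_succ]
      exact getElem?_modAt_self f l i (by simpa using h)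

lemma getElem?_modAt_ne (f : ℕ → ℕ) : ∀ (l : Blk) (i j : ℕ), j ≠ i →
    (modAt f l i)[j]? = l[j]?
  | [], _, _, _ => by simp [modAt]
  | x :: l, 0, j, h => by
      cases j with
      | zero => omega
      | succ j => simp [modAt]
  | x :: l, i+1, j, h => by
      cases j with
      | zero => simp [modAt]
      | succ j => simp only [modAt, List.getElem?_cons_succ]
                  exact getElem?_modAt_ne f l i j (by omega)

lemma modAt_append_left (f : ℕ → ℕ) : ∀ (F G : Blk) (i : ℕ), i < F.length →
    modAt f (F ++ G) i = modAt f F i ++ G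
  | x :: F, G, 0, _ => rfl
  | x :: F, G, i+1, h => by
      have hrec := modAt_append_left f F G i (by simpa using h)
      simp only [List.cons_append, modAt]
      exact congrArg (x :: ·) hrec
  | [], G, i, h => by simp at h

lemma modAt_append_right (f : ℕ → ℕ) : ∀ (F G : Blk) (i : ℕ),
    modAt f (F ++ G) (F.length + i) = F ++ modAt f G i
  | [], G, i => by simp
  | x :: F, G, i => by
      simp only [List.cons_append, List.length_cons]
      have : F.length + 1 + i = (F.length + i) + 1 := by omega
      rw [this]
      simp only [modAt]
      rw [modAt_append_right f F G i]

lemma tot_bump : ∀ (l : Blk) (i : ℕ), i < l.length → tot (bump l i) = tot l + 1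
  | x :: l, 0, _ => by simp [bump, modAt]; omega
  | x :: l, i+1, h => by
      have hrec := tot_bump l i (by simpa using h)
      simp only [bump, modAt] at hrec ⊢
      simp only [tot_cons, hrec]
      omega
  | [], i, h => by simp at h

lemma tot_cut (l : Blk) (i : ℕ) (x : Bool × ℕ) (hx : l[i]? = some x) (hp : 0 < x.2) :
    tot (cutAt l i) + 1 = tot l := by
  induction l generalizing i with
  | nil => simp at hx
  | cons y l ih =>
      cases i with
      | zero => simp at hx; subst hx; simp [cutAt, modAt]; omega
      | succ i =>
          simp only [List.getElem?_cons_succ] at hx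
          have := ih i hx
          simp [cutAt, modAt] at *
          omega

lemma mem_modAt (f : ℕ → ℕ) : ∀ (l : Blk) (i : ℕ) (x : Bool × ℕ), x ∈ modAt f l i →
    x ∈ l ∨ ∃ y : Bool × ℕ, l[i]? = some y ∧ x = (y.1, f y.2)
  | [], i, x, h => by simp [modAt] at h
  | y :: l, 0, x, h => by
      simp only [modAt, List.mem_cons] at h
      rcases h with rfl | h
      · exact Or.inr ⟨y, by simp⟩
      · exact Or.inl (by simp [h])
  | y :: l, i+1, x, h => by
      simp only [modAt, List.mem_cons] at h
      rcases h with rfl | h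
      · exact Or.inl (by simp)
      · rcases mem_modAt f l i x h with h | ⟨z, hz, hx⟩
        · exact Or.inl (by simp [h])
        · exact Or.inr ⟨z, by simpa using hz, hx⟩

lemma PosB_modAt (f : ℕ → ℕ) (l : Blk) (i : ℕ) (hl : PosB l)
    (hf : ∀ y : Bool × ℕ, l[i]? = some y → 0 < f y.2) : PosB (modAt f l i) := by
  intro x hx
  rcases mem_modAt f l i x hx with h | ⟨y, hy, rfl⟩
  · exact hl x h
  · exact hf y hy

lemma PosB_bump (l : Blk) (i : ℕ) (hl : PosB l) : PosB (bump l i) :=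
  PosB_modAt _ l i hl (fun y _ => by omega)

lemma altB_iff (l : Blk) : AltB l ↔ (l.map Prod.fst).Chain' (· ≠ ·) := by
  simp only [AltB, List.Chain', List.isChain_map]

lemma AltB_of_map_fst_eq {l₁ l₂ : Blk} (h : l₁.map Prod.fst = l₂.map Prod.fst)
    (h₁ : AltB l₁) : AltB l₂ := by
  rw [altB_iff] at h₁ ⊢; rwa [h] at h₁

lemma AltB_modAt (f : ℕ → ℕ) (l : Blk) (i : ℕ) (h : AltB l) : AltB (modAt f l i) :=
  AltB_of_map_fst_eq (map_fst_modAt f l i).symm h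

lemma bump_index_inj {l : Blk} {i j : ℕ} (hi : i < l.length)
    (h : bump l i = bump l j) : i = j := by
  by_contra hne
  obtain ⟨x, hx⟩ : ∃ x, l[i]? = some x := by
    rw [List.getElem?_eq_getElem hi]; exact ⟨_, rfl⟩
  have h1 : (bump l i)[i]? = some (x.1, x.2 + 1) := by
    rw [bump, getElem?_modAt_self _ _ _ hi, hx]; rfl
  have h2 : (bump l j)[i]? = some x := by
    rw [bump, getElem?_modAt_ne _ l j i hne, hx]
  rw [h, h2] at h1
  have : x.2 + 1 = x.2 := congrArg Prod.snd (Option.some_injective _ h1.symm)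
  omega

lemma modAt_comm (f g : ℕ → ℕ) : ∀ (l : Blk) (i j : ℕ), i ≠ j →
    modAt f (modAt g l j) i = modAt g (modAt f l i) j
  | [], _, _, _ => by simp [modAt]
  | x :: l, 0, 0, h => absurd rfl h
  | x :: l, 0, j+1, _ => by simp [modAt]
  | x :: l, i+1, 0, _ => by simp [modAt]
  | x :: l, i+1, j+1, h => by
      simp only [modAt]
      rw [modAt_comm f g l i j (by omega)]

lemma forall₂_le_self_modAt (f : ℕ → ℕ) (hf : ∀ n, n ≤ f n) :
    ∀ (l : Blk) (i : ℕ), List.Forall₂ (fun a b => a.1 = b.1 ∧ a.2 ≤ b.2) l (modAt f l i)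
  | [], _ => List.Forall₂.nil
  | x :: l, 0 => List.Forall₂.cons ⟨rfl, hf _⟩ (List.forall₂_same.2 (fun _ _ => ⟨rfl, le_refl _⟩))
  | x :: l, i+1 => List.Forall₂.cons ⟨rfl, le_refl _⟩ (forall₂_le_self_modAt f hf l i)

lemma forall₂_modAt_le_self (f : ℕ → ℕ) (hf : ∀ n, f n ≤ n) :
    ∀ (l : Blk) (i : ℕ), List.Forall₂ (fun a b => a.1 = b.1 ∧ a.2 ≤ b.2) (modAt f l i) l
  | [], _ => List.Forall₂.nil
  | x :: l, 0 => List.Forall₂.cons ⟨rfl, hf _⟩ (List.forall₂_same.2 (fun _ _ => ⟨rfl, le_refl _⟩))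
  | x :: l, i+1 => List.Forall₂.cons ⟨rfl, le_refl _⟩ (forall₂_modAt_le_self f hf l i)

lemma ww_sublist_of_forall₂ {l₁ l₂ : Blk}
    (h : List.Forall₂ (fun a b => a.1 = b.1 ∧ a.2 ≤ b.2) l₁ l₂) :
    (ww l₁).Sublist (ww l₂) := by
  induction h with
  | nil => simp
  | cons hab _ ih =>
      rw [ww_cons, ww_cons]
      exact List.Sublist.append (hab.1 ▸ (List.replicate_sublist_replicate _).2 hab.2) ih


lemma lemG {σ : Bool} : ∀ (k m : ℕ) (z y : BW),
    (List.replicate m σ ++ z).Sublist (List.replicate k σ ++ y) →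
    (List.replicate (m - k) σ ++ z).Sublist (List.replicate (k - m) σ ++ y)
  | 0, m, z, y, h => by simpa using h
  | k+1, 0, z, y, h => by simpa using h
  | k+1, m+1, z, y, h => by
      have h' : (List.replicate m σ ++ z).Sublist (List.replicate k σ ++ y) := by
        rw [List.replicate_succ, List.replicate_succ, List.cons_append, List.cons_append] at h
        exact List.cons_sublist_cons.mp h
      simpa [Nat.succ_sub_succ] using lemG k m z y h'

lemma lemH {σ : Bool} : ∀ (k : ℕ) {z y : BW}, z.Sublist (List.replicate k σ ++ y) →
    z.head? ≠ some σ → z.Sublist y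
  | 0, z, y, h, _ => by simpa using h
  | k+1, z, y, h, hne => by
      rw [List.replicate_succ, List.cons_append] at h
      cases h with
      | cons _ h' => exact lemH k h' hne
      | cons_cons _ h' => simp at hne

lemma head?_ww {x : Bool × ℕ} (l : Blk) (hx : 0 < x.2) : (ww (x :: l)).head? = some x.1 := by
  obtain ⟨m, hm⟩ : ∃ m, x.2 = m + 1 := ⟨x.2 - 1, by omega⟩
  rw [ww_cons, hm, List.replicate_succ]
  rfl

lemma head?_ww_ne {σ : Bool} {m : ℕ} {l : Blk} (hA : AltB ((σ, m) :: l)) (hP : PosB l) :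
    (ww l).head? ≠ some σ := by
  cases l with
  | nil => simp
  | cons y l =>
      rw [head?_ww l (hP y (by simp))]
      have : σ ≠ y.1 := List.isChain_cons_cons.mp hA |>.1
      simp [this.symm]

lemma AltB_tail {x : Bool × ℕ} {l : Blk} (h : AltB (x :: l)) : AltB l := h.tail

lemma PosB_tail {x : Bool × ℕ} {l : Blk} (h : PosB (x :: l)) : PosB l :=
  fun y hy => h y (by simp [hy])

/-- a word with `s.length` nonempty alternating blocks embeds only in words with
at least that many (possibly empty) blocks -/
lemma lenle : ∀ (t s : Blk), AltB s → PosB s → (ww s).Sublist (ww t) → s.length ≤ t.length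
  | t, [], _, _, _ => by simp
  | [], (x :: s), _, hP, h => by
      exfalso
      rw [ww_cons] at h
      simp only [ww_nil, List.sublist_nil] at h
      have h1 := hP x (by simp)
      have h2 := congrArg List.length h
      simp at h2
      omega
  | ((τ, r0) :: t'), ((σ, m0) :: s'), hA, hP, h => by
      rw [ww_cons, ww_cons] at h
      by_cases hστ : σ = τ
      · subst hστ
        have hg := lemG r0 m0 (ww s') (ww t') h
        by_cases hm : m0 ≤ r0
        · rw [Nat.sub_eq_zero_of_le hm] at hg
          simp only [List.replicate_zero, List.nil_append] at hg
          have hs' : (ww s').Sublist (ww t') :=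
            lemH (r0 - m0) hg (head?_ww_ne hA (PosB_tail hP))
          have := lenle t' s' (AltB_tail hA) (PosB_tail hP) hs'
          simpa using Nat.succ_le_succ this
        · rw [Nat.sub_eq_zero_of_le (by omega : r0 ≤ m0)] at hg
          simp only [List.replicate_zero, List.nil_append] at hg
          have hg' : (ww ((σ, m0 - r0) :: s')).Sublist (ww t') := by
            rw [ww_cons]; exact hg
          have hA' : AltB ((σ, m0 - r0) :: s') := by
            rcases l' : s' with _ | ⟨y, s''⟩
            · simp [AltB, List.Chain']
            · subst l'
              exact List.isChain_cons_cons.mpr ⟨(List.isChain_cons_cons.mp hA).1, (List.isChain_cons_cons.mp hA).2⟩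
          have hP' : PosB ((σ, m0 - r0) :: s') := by
            intro y hy
            rcases List.mem_cons.mp hy with rfl | hy
            · simp; omega
            · exact hP y (by simp [hy])
          have := lenle t' ((σ, m0 - r0) :: s') hA' hP' hg'
          simp at this ⊢
          omega
      · have hne : (ww ((σ, m0) :: s')).head? ≠ some τ := by
          rw [head?_ww s' (hP (σ, m0) (by simp))]
          simp [hστ]
        have h2 : (ww ((σ, m0) :: s')).Sublist (ww t') := by
          rw [ww_cons]
          exact lemH r0 h (by rwa [ww_cons] at hne)
        have := lenle t' ((σ, m0) :: s') hA hP h2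
        simp at this ⊢
        omega


lemma map_fst_eq_of_forall₂ {α : Type*} {f0 : α → Bool} {R : α → Bool × ℕ → Prop}
    {cs : List α} {bl : Blk}
    (hR : ∀ a b, R a b → b.1 = f0 a) (h : List.Forall₂ R cs bl) :
    bl.map Prod.fst = cs.map f0 := by
  induction h with
  | nil => rfl
  | cons hab _ ih => simp [ih, hR _ _ hab]

lemma forall₂_fst_of_map_fst_eq : ∀ {s t : Blk}, s.map Prod.fst = t.map Prod.fst →
    List.Forall₂ (fun a b => a.1 = b.1) s t
  | [], [], _ => List.Forall₂.nil
  | [], _ :: _, h => by simp at h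
  | _ :: _, [], h => by simp at h
  | x :: s, y :: t, h => by
      simp only [List.map_cons, List.cons.injEq] at h
      exact List.Forall₂.cons h.1 (forall₂_fst_of_map_fst_eq h.2)

lemma forall₂_rel_getElem? {α β : Type*} {R : α → β → Prop} :
    ∀ {l₁ : List α} {l₂ : List β}, List.Forall₂ R l₁ l₂ →
    ∀ (i : ℕ) (a : α) (b : β), l₁[i]? = some a → l₂[i]? = some b → R a b := by
  intro l₁ l₂ h
  induction h with
  | nil => intro i a b h1; simp at h1
  | cons hab htail ih =>
      intro i a b h1 h2
      cases i with
      | zero => simp at h1 h2; rwa [← h1, ← h2]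
      | succ i => exact ih i a b (by simpa using h1) (by simpa using h2)

lemma snd_le : ∀ (s t : Blk), List.Forall₂ (fun a b => a.1 = b.1) s t → AltB s → PosB s →
    (ww s).Sublist (ww t) → List.Forall₂ (fun a b => a.2 ≤ b.2) s t := by
  intro s t hf
  induction hf with
  | nil => intro _ _ _; exact List.Forall₂.nil
  | @cons a b s' t' hab htail ih =>
      intro hA hP hsub
      obtain ⟨σ, m0⟩ := a
      obtain ⟨τ, r0⟩ := b
      simp only at hab
      subst hab
      rw [ww_cons, ww_cons] at hsub
      have hg := lemG r0 m0 (ww s') (ww t') hsub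
      by_cases hm : m0 ≤ r0
      · rw [Nat.sub_eq_zero_of_le hm] at hg
        simp only [List.replicate_zero, List.nil_append] at hg
        have hs' : (ww s').Sublist (ww t') :=
          lemH (r0 - m0) hg (head?_ww_ne hA (PosB_tail hP))
        exact List.Forall₂.cons hm (ih (AltB_tail hA) (PosB_tail hP) hs')
      · exfalso
        rw [Nat.sub_eq_zero_of_le (by omega : r0 ≤ m0)] at hg
        simp only [List.replicate_zero, List.nil_append] at hg
        have hg' : (ww ((σ, m0 - r0) :: s')).Sublist (ww t') := by rw [ww_cons]; exact hg
        have hA' : AltB ((σ, m0 - r0) :: s') := by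
          cases s' with
          | nil => simp [AltB, List.Chain']
          | cons y s'' =>
              exact List.isChain_cons_cons.mpr ⟨(List.isChain_cons_cons.mp hA).1, (List.isChain_cons_cons.mp hA).2⟩
        have hP' : PosB ((σ, m0 - r0) :: s') := by
          intro y hy
          rcases List.mem_cons.mp hy with rfl | hy
          · simp; omega
          · exact hP y (by simp [hy])
        have hlen := lenle t' ((σ, m0 - r0) :: s') hA' hP' hg'
        have := htail.length_eq
        simp at hlen
        omega

lemma ww_inj {s t : Blk} (hf : List.Forall₂ (fun a b => a.1 = b.1) s t)
    (hAs : AltB s) (hPs : PosB s) (hPt : PosB t) (h : ww s = ww t) : s = t := by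
  have hmapeq : t.map Prod.fst = s.map Prod.fst :=
    map_fst_eq_of_forall₂ (f0 := Prod.fst) (fun a b hab => Eq.symm hab) hf
  have hAt : AltB t := AltB_of_map_fst_eq hmapeq.symm hAs
  have h1 := snd_le s t hf hAs hPs (h ▸ List.Sublist.refl _)
  have h2 := snd_le t s (forall₂_fst_of_map_fst_eq hmapeq) hAt hPt (h ▸ List.Sublist.refl _)
  have hlen := hf.length_eq
  apply List.ext_getElem hlen
  intro i hi hit
  have e1 := forall₂_rel_getElem? hf i _ _ (List.getElem?_eq_getElem hi) (List.getElem?_eq_getElem hit)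
  have e2 := forall₂_rel_getElem? h1 i _ _ (List.getElem?_eq_getElem hi) (List.getElem?_eq_getElem hit)
  have e3 := forall₂_rel_getElem? h2 i _ _ (List.getElem?_eq_getElem hit) (List.getElem?_eq_getElem hi)
  exact Prod.ext e1 (by omega)

lemma head?_dropWhile_ne (p : Bool → Bool) : ∀ (l : BW) (x : Bool),
    (l.dropWhile p).head? = some x → p x = false
  | [], x, h => by simp at h
  | y :: l, x, h => by
      by_cases hy : p y
      · rw [List.dropWhile_cons_of_pos hy] at h
        exact head?_dropWhile_ne p l x h
      · rw [List.dropWhile_cons_of_neg hy] at h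
        simp at h
        subst h
        simpa using hy

lemma sandwich : ∀ (lo hi : Blk), List.Forall₂ (fun a c => a.1 = c.1) lo hi →
    ∀ (b : BW), AltB lo → PosB lo →
    (ww lo).Sublist b → b.Sublist (ww hi) →
    ∃ mid : Blk, b = ww mid ∧ List.Forall₂ (fun a c => a.1 = c.1 ∧ a.2 ≤ c.2) lo mid ∧
      List.Forall₂ (fun c a => c.2 ≤ a.2) mid hi := by
  intro lo hi hf
  induction hf with
  | nil =>
      intro b _ _ _ hup
      simp only [ww_nil, List.sublist_nil] at hup
      exact ⟨[], by simp [hup], List.Forall₂.nil, List.Forall₂.nil⟩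
  | @cons a c lo' hi' hac htail ih =>
      intro b hA hP hlow hup
      obtain ⟨σ, l0⟩ := a
      obtain ⟨σ', h0⟩ := c
      simp only at hac
      subst hac
      set tk := b.takeWhile (· == σ) with htk
      set dr := b.dropWhile (· == σ) with hdr
      set c0 := tk.length with hc0
      have htkrep : tk = List.replicate c0 σ := by
        apply List.eq_replicate_of_mem
        intro x hx
        have := List.mem_takeWhile_imp hx
        simpa using this
      have hb : b = List.replicate c0 σ ++ dr := by
        rw [← htkrep]; exact List.takeWhile_append_dropWhile.symm
      have hdrhead : dr.head? ≠ some σ := by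
        intro hcon
        have := head?_dropWhile_ne (· == σ) b σ hcon
        simp at this
      rw [ww_cons] at hlow hup
      rw [hb] at hlow hup
      -- lower: ww lo' <+ dr
      have hlow1 := lemG c0 l0 (ww lo') dr hlow
      have hlodr : (ww lo').Sublist dr := by
        have h1 : (ww lo').Sublist (List.replicate (l0 - c0) σ ++ ww lo') :=
          List.sublist_append_right _ _
        have h2 := h1.trans hlow1
        exact lemH (c0 - l0) h2 (head?_ww_ne hA (PosB_tail hP))
      by_cases hch : c0 ≤ h0
      · -- upper: dr <+ ww hi'
        have hup1 := lemG h0 c0 dr (ww hi') hup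
        rw [Nat.sub_eq_zero_of_le hch] at hup1
        simp only [List.replicate_zero, List.nil_append] at hup1
        have hdrhi : dr.Sublist (ww hi') := lemH (h0 - c0) hup1 hdrhead
        have hl0c : l0 ≤ c0 := by
          by_contra hcon
          rw [Nat.sub_eq_zero_of_le (by omega : c0 ≤ l0)] at hlow1
          simp only [List.replicate_zero, List.nil_append] at hlow1
          have hg' : (ww ((σ, l0 - c0) :: lo')).Sublist (ww hi') := by
            rw [ww_cons]; exact hlow1.trans hdrhi
          have hA' : AltB ((σ, l0 - c0) :: lo') := by
            cases lo' with
            | nil => simp [AltB, List.Chain']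
            | cons y s'' =>
                exact List.isChain_cons_cons.mpr ⟨(List.isChain_cons_cons.mp hA).1, (List.isChain_cons_cons.mp hA).2⟩
          have hP' : PosB ((σ, l0 - c0) :: lo') := by
            intro y hy
            rcases List.mem_cons.mp hy with rfl | hy
            · simp; omega
            · exact hP y (by simp [hy])
          have hlen := lenle hi' ((σ, l0 - c0) :: lo') hA' hP' hg'
          have := htail.length_eq
          simp at hlen
          omega
        obtain ⟨mid', hmid1, hmid2, hmid3⟩ :=
          ih dr (AltB_tail hA) (PosB_tail hP) hlodr hdrhi
        refine ⟨(σ, c0) :: mid', ?_, List.Forall₂.cons ⟨rfl, hl0c⟩ hmid2,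
          List.Forall₂.cons hch hmid3⟩
        rw [ww_cons, hb, hmid1]
      · exfalso
        have hup1 := lemG h0 c0 dr (ww hi') hup
        rw [Nat.sub_eq_zero_of_le (by omega : h0 ≤ c0)] at hup1
        simp only [List.replicate_zero, List.nil_append] at hup1
        have hcomb : (ww ((σ, c0 - h0) :: lo')).Sublist (ww hi') := by
          rw [ww_cons]
          exact (hlodr.append_left (List.replicate (c0 - h0) σ)).trans hup1
        have hA' : AltB ((σ, c0 - h0) :: lo') := by
          cases lo' with
          | nil => simp [AltB, List.Chain']
          | cons y s'' =>
              exact List.isChain_cons_cons.mpr ⟨(List.isChain_cons_cons.mp hA).1, (List.isChain_cons_cons.mp hA).2⟩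
        have hP' : PosB ((σ, c0 - h0) :: lo') := by
          intro y hy
          rcases List.mem_cons.mp hy with rfl | hy
          · simp; omega
          · exact hP y (by simp [hy])
        have hlen := lenle hi' ((σ, c0 - h0) :: lo') hA' hP' hcomb
        have := htail.length_eq
        simp at hlen
        omega

lemma tot_mono {lo mid : Blk}
    (h : List.Forall₂ (fun a c => a.1 = c.1 ∧ a.2 ≤ c.2) lo mid) : tot lo ≤ tot mid := by
  induction h with
  | nil => simp
  | cons hab _ ih => simp only [tot_cons]; omega

lemma eq_of_tot_le {lo mid : Blk}
    (h : List.Forall₂ (fun a c => a.1 = c.1 ∧ a.2 ≤ c.2) lo mid)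
    (ht : tot mid = tot lo) : lo = mid := by
  induction h with
  | nil => rfl
  | @cons a c lo' mid' hab htail ih =>
      simp only [tot_cons] at ht
      have h1 := tot_mono htail
      have h2 : a.2 = c.2 := by omega
      have h3 : tot mid' = tot lo' := by omega
      rw [ih h3, Prod.ext hab.1 h2]

lemma exists_bump : ∀ (lo mid : Blk),
    List.Forall₂ (fun a c => a.1 = c.1 ∧ a.2 ≤ c.2) lo mid →
    tot mid = tot lo + 1 → ∃ i < lo.length, mid = bump lo i := by
  intro lo mid h
  induction h with
  | nil => intro ht; simp at ht
  | @cons a c lo' mid' hab htail ih =>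
      intro ht
      simp only [tot_cons] at ht
      have h1 := tot_mono htail
      by_cases hc : c.2 = a.2
      · have h3 : tot mid' = tot lo' + 1 := by omega
        obtain ⟨i, hi, hmid⟩ := ih h3
        have hca : c = a := Prod.ext hab.1.symm hc
        exact ⟨i + 1, by simp; omega, by simp [bump, modAt, hmid, hca]⟩
      · have h2 : c.2 = a.2 + 1 := by omega
        have h3 : tot mid' = tot lo' := by omega
        have h4 := eq_of_tot_le htail h3
        refine ⟨0, by simp, ?_⟩
        have hca : c = (a.1, a.2 + 1) := Prod.ext hab.1.symm h2
        simp [bump, modAt, ← h4, hca]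


lemma ww_snoc : ∀ (l : Blk) (h : l ≠ []) (σ : Bool), (l.getLast h).1 = σ →
    ww l ++ [σ] = ww (bump l (l.length - 1))
  | [], h, _, _ => absurd rfl h
  | [x], _, σ, hlast => by
      have hx : x.1 = σ := by simpa using hlast
      show ww [x] ++ [σ] = ww [(x.1, x.2 + 1)]
      rw [ww_cons, ww_cons, ← hx]
      simp [List.replicate_succ']
  | x :: y :: l, _, σ, hlast => by
      have hne : (y :: l) ≠ [] := by simp
      have hlast' : ((y :: l).getLast hne).1 = σ := by
        simpa [List.getLast_cons hne] using hlast
      have ih := ww_snoc (y :: l) hne σ hlast'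
      have hlen : (x :: y :: l).length - 1 = ((y :: l).length - 1) + 1 := by simp
      rw [hlen]
      show ww (x :: y :: l) ++ [σ] = ww (x :: bump (y :: l) ((y :: l).length - 1))
      calc ww (x :: y :: l) ++ [σ]
          = List.replicate x.2 x.1 ++ (ww (y :: l) ++ [σ]) := by
            rw [ww_cons, List.append_assoc]
        _ = List.replicate x.2 x.1 ++ ww (bump (y :: l) ((y :: l).length - 1)) := by rw [ih]
        _ = ww (x :: bump (y :: l) ((y :: l).length - 1)) := (ww_cons _ _).symm

lemma head?_ww_bump {l : Blk} (hP : PosB l) (hne : l ≠ []) (j : ℕ) :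
    (ww (bump l j)).head? = some ((l.head hne).1) := by
  cases l with
  | nil => exact absurd rfl hne
  | cons y l =>
      cases j with
      | zero =>
          show (ww ((y.1, y.2 + 1) :: l)).head? = some y.1
          exact head?_ww l (by simp)
      | succ j =>
          show (ww (y :: bump l j)).head? = some y.1
          exact head?_ww _ (hP y (by simp))

lemma cons_ww_head {l : Blk} {y : Bool × ℕ} (rest : Blk) (h : l = y :: rest) :
    y.1 :: ww l = ww (bump l 0) := by
  subst h
  show y.1 :: (List.replicate y.2 y.1 ++ ww rest) = ww ((y.1, y.2 + 1) :: rest)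
  rw [ww_cons]
  simp [List.replicate_succ]

lemma mix {F B : Blk} {σ : Bool} (hAF : AltB F) (hPF : PosB F) (hAB : AltB B) (hPB : PosB B)
    (hFne : F ≠ []) (hBne : B ≠ [])
    (hlast : (F.getLast hFne).1 = σ) (hhead : (B.head hBne).1 = σ)
    {i j : ℕ} (hi : i < F.length) (hj : j < B.length)
    (heq : ww (bump F i) ++ ww B = ww F ++ ww (bump B j)) :
    i = F.length - 1 ∧ j = 0 := by
  set L := ww F with hL
  set L1 := ww (bump F i) with hL1
  set X := ww B with hX
  set Y := ww (bump B j) with hY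
  have hlen : L1.length = L.length + 1 := by
    rw [hL1, hL, length_ww, length_ww, tot_bump F i hi]
  -- L is a prefix of L1
  have htake : L1.take L.length = L := by
    have h1 : (L1 ++ X).take L.length = L1.take L.length := by
      rw [List.take_append]
      simp [hlen, Nat.sub_eq_zero_of_le (by omega : L.length ≤ L1.length)]
    have h2 : (L ++ Y).take L.length = L := List.take_left
    rw [← h1, heq, h2]
  obtain ⟨ch, hch⟩ : ∃ ch, L1.drop L.length = [ch] := by
    rw [← List.length_eq_one_iff]
    rw [List.length_drop, hlen]
    omega
  have hL1eq : L1 = L ++ [ch] := by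
    conv_lhs => rw [← List.take_append_drop L.length L1]
    rw [htake, hch]
  have hYeq : Y = ch :: X := by
    rw [hL1eq] at heq
    rw [List.append_assoc] at heq
    exact (List.append_cancel_left heq).symm
  have hch_sig : ch = σ := by
    have h1 : Y.head? = some ch := by rw [hYeq]; rfl
    have h2 : Y.head? = some ((B.head hBne).1) := head?_ww_bump hPB hBne j
    rw [h1, hhead] at h2
    exact (Option.some_injective _ h2)
  rw [hch_sig] at hL1eq hYeq
  -- conclude j = 0
  obtain ⟨y, Brest, hBsplit⟩ : ∃ y Brest, B = y :: Brest := by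
    cases B with
    | nil => exact absurd rfl hBne
    | cons y Brest => exact ⟨y, Brest, rfl⟩
  have hYw : Y = ww (bump B 0) := by
    rw [hYeq, hX]
    have hy1 : y.1 = σ := by rw [← hhead]; simp [hBsplit]
    rw [← hy1]
    exact cons_ww_head Brest hBsplit
  have hj0 : j = 0 := by
    have hmap : (bump B j).map Prod.fst = (bump B 0).map Prod.fst := by
      rw [bump, bump, map_fst_modAt, map_fst_modAt]
    have := ww_inj (forall₂_fst_of_map_fst_eq hmap)
      (AltB_modAt _ B j hAB) (PosB_bump B j hPB) (PosB_bump B 0 hPB) (hY ▸ hYw)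
    exact bump_index_inj (by omega) this
  -- conclude i = F.length - 1
  have hL1w : L1 = ww (bump F (F.length - 1)) := by
    rw [hL1eq, hL, ww_snoc F hFne σ hlast]
  have hieq : i = F.length - 1 := by
    have hmap : (bump F i).map Prod.fst = (bump F (F.length - 1)).map Prod.fst := by
      rw [bump, bump, map_fst_modAt, map_fst_modAt]
    have := ww_inj (forall₂_fst_of_map_fst_eq hmap)
      (AltB_modAt _ F i hAF) (PosB_bump F i hPF) (PosB_bump F _ hPF) (hL1 ▸ hL1w)
    exact bump_index_inj hi this
  exact ⟨hieq, hj0⟩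


/-! ### Template-level auxiliary lemmas -/

def toBl (cs : List (Bool × ℕ∞)) (N : ℕ) : Blk :=
  cs.map fun c => (c.1, if c.2 = ⊤ then N else c.2.toNat)

lemma clWord_eq_ww (cs : List (Bool × ℕ∞)) (N : ℕ) : clWord cs N = ww (toBl cs N) := by
  simp only [clWord, ww, toBl, List.map_map]
  rfl

def fitsIn (cs : List (Bool × ℕ∞)) (bl : Blk) : Prop :=
  List.Forall₂ (fun c x => x.1 = c.1 ∧ (c.2 ≠ ⊤ → x.2 ≤ c.2.toNat)) cs bl

def Radm (cs : List (Bool × ℕ∞)) (bl : Blk) : Prop :=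
  List.Forall₂ (fun c x => x.1 = c.1 ∧ (c.2 = ⊤ → 1 ≤ x.2) ∧ (c.2 ≠ ⊤ → x.2 = c.2.toNat))
    cs bl

lemma mem_of_getElem?' {α : Type*} {l : List α} {i : ℕ} {a : α} (h : l[i]? = some a) :
    a ∈ l := by
  induction l generalizing i with
  | nil => simp at h
  | cons y l ih =>
      cases i with
      | zero => simp at h; simp [h]
      | succ i => exact List.mem_cons_of_mem _ (ih (by simpa using h))

lemma le_tot_of_mem {bl : Blk} {x : Bool × ℕ} (hx : x ∈ bl) : x.2 ≤ tot bl := by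
  induction bl with
  | nil => simp at hx
  | cons y l ih =>
      rcases List.mem_cons.mp hx with rfl | hx
      · simp
      · have := ih hx
        simp only [tot_cons]
        omega

lemma sublist_toBl_of_fits {cs : List (Bool × ℕ∞)} {bl : Blk} (h : fitsIn cs bl) {N : ℕ}
    (hN : ∀ x ∈ bl, x.2 ≤ N) : (ww bl).Sublist (ww (toBl cs N)) := by
  induction h with
  | nil => simp [toBl]
  | @cons c x cs' bl' hcx htail ih =>
      show (ww (x :: bl')).Sublist (ww (toBl (c :: cs') N))
      have htb : toBl (c :: cs') N = (c.1, if c.2 = ⊤ then N else c.2.toNat) :: toBl cs' N := rfl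
      rw [htb, ww_cons, ww_cons]
      refine List.Sublist.append ?_ (ih (fun y hy => hN y (by simp [hy])))
      rw [hcx.1]
      apply (List.replicate_sublist_replicate _).2
      by_cases hc : c.2 = ⊤
      · simp only [hc, if_pos rfl]
        exact hN x (by simp)
      · simp only [if_neg hc]
        exact hcx.2 hc

lemma mem_Zcl_of_fits {cs : List (Bool × ℕ∞)} {bl : Blk} (h : fitsIn cs bl) :
    ww bl ∈ Zcl cs := by
  refine ⟨tot bl, ?_⟩
  rw [clWord_eq_ww]
  exact sublist_toBl_of_fits h (fun x hx => le_tot_of_mem hx)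

lemma clWord_mono (cs : List (Bool × ℕ∞)) {N M : ℕ} (h : N ≤ M) :
    (clWord cs N).Sublist (clWord cs M) := by
  induction cs with
  | nil => simp [clWord]
  | cons c cs ih =>
      show (clWord (c :: cs) N).Sublist (clWord (c :: cs) M)
      have e : ∀ K, clWord (c :: cs) K
          = List.replicate (if c.2 = ⊤ then K else c.2.toNat) c.1 ++ clWord cs K := by
        intro K; simp [clWord]
      rw [e N, e M]
      refine List.Sublist.append ((List.replicate_sublist_replicate _).2 ?_) ih
      by_cases hc : c.2 = ⊤ <;> simp [hc, h]

lemma Zcl_dcl {cs : List (Bool × ℕ∞)} {a b : BW} (hab : a.Sublist b) (hb : b ∈ Zcl cs) :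
    a ∈ Zcl cs := by
  obtain ⟨N, hN⟩ := hb
  exact ⟨N, hab.trans hN⟩

lemma Radm.fits {cs : List (Bool × ℕ∞)} {bl : Blk} (h : Radm cs bl) : fitsIn cs bl :=
  h.imp fun _ _ hcx => ⟨hcx.1, fun hne => le_of_eq (hcx.2.2 hne)⟩

lemma Radm.posB {cs : List (Bool × ℕ∞)} {bl : Blk} (h : Radm cs bl)
    (h0 : ∀ c ∈ cs, c.2 ≠ 0) : PosB bl := by
  induction h with
  | nil => intro y hy; simp at hy
  | @cons c x cs' bl' hcx htail ih =>
      intro y hy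
      rcases List.mem_cons.mp hy with rfl | hy
      · by_cases hc : c.2 = ⊤
        · have := hcx.2.1 hc; omega
        · rw [hcx.2.2 hc]
          have hne : c.2 ≠ 0 := h0 c (by simp)
          refine Nat.pos_of_ne_zero (fun h => ?_)
          rw [ENat.toNat_eq_zero] at h
          rcases h with h | h
          · exact hne h
          · exact hc h
      · exact ih (fun c hc => h0 c (by simp [hc])) y hy

lemma Radm.map_fst {cs : List (Bool × ℕ∞)} {bl : Blk} (h : Radm cs bl) :
    bl.map Prod.fst = cs.map Prod.fst :=
  map_fst_eq_of_forall₂ (f0 := Prod.fst) (fun _ _ hcx => hcx.1) h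

lemma Radm.altB {cs : List (Bool × ℕ∞)} {bl : Blk} (h : Radm cs bl)
    (halt : cs.Chain' fun c d => c.1 ≠ d.1) : AltB bl := by
  rw [altB_iff, h.map_fst]
  exact (List.isChain_map Prod.fst).mpr halt

lemma fits_of_le : ∀ {cs : List (Bool × ℕ∞)} {bl bl' : Blk}, fitsIn cs bl →
    List.Forall₂ (fun a b => a.1 = b.1 ∧ a.2 ≤ b.2) bl' bl → fitsIn cs bl' := by
  intro cs bl bl' h1
  induction h1 generalizing bl' with
  | nil => intro h2; cases h2; exact List.Forall₂.nil
  | @cons c x cs' bl'' hcx htail ih =>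
      intro h2
      cases h2 with
      | cons hyx h2' =>
          exact List.Forall₂.cons
            ⟨hyx.1.trans hcx.1, fun hne => hyx.2.trans (hcx.2 hne)⟩ (ih h2')

lemma fits_cut {cs : List (Bool × ℕ∞)} {bl : Blk} (h : fitsIn cs bl) (i : ℕ) :
    fitsIn cs (cutAt bl i) :=
  fits_of_le h (forall₂_modAt_le_self (· - 1) (fun n => Nat.sub_le n 1) bl i)

lemma Radm.bump {cs : List (Bool × ℕ∞)} {bl : Blk} (h : Radm cs bl) :
    ∀ {i : ℕ} {c : Bool × ℕ∞}, cs[i]? = some c → c.2 = ⊤ → Radm cs (bump bl i) := by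
  induction h with
  | nil => intro i c hc; simp at hc
  | @cons c x cs' bl' hcx htail ih =>
      intro i c' hc' hcT
      cases i with
      | zero =>
          simp only [List.getElem?_cons_zero, Option.some_inj] at hc'
          subst hc'
          exact List.Forall₂.cons
            ⟨hcx.1, fun _ => Nat.succ_le_succ (Nat.zero_le _), fun hne => absurd hcT hne⟩ htail
      | succ i =>
          exact List.Forall₂.cons hcx (ih (by simpa using hc') hcT)

def InfIdx (cs : List (Bool × ℕ∞)) : Finset ℕ :=
  (Finset.range cs.length).filter fun i => (cs.getD i (true, 1)).2 = ⊤

lemma mem_InfIdx {cs : List (Bool × ℕ∞)} {i : ℕ} :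
    i ∈ InfIdx cs ↔ i < cs.length ∧ (cs.getD i (true, 1)).2 = ⊤ := by
  simp [InfIdx]

lemma getD_eq_of_getElem? {cs : List (Bool × ℕ∞)} {i : ℕ} {c : Bool × ℕ∞}
    (h : cs[i]? = some c) : cs.getD i (true, 1) = c := by
  rw [List.getD_eq_getElem?_getD, h]
  rfl

/-! ### Graph-level auxiliary lemmas -/

lemma mem_upFinset {S : Set BW} {a b : BW} :
    b ∈ upFinset S a ↔ b ∈ S ∧ CoveredBy a b := by
  rw [upFinset, Set.Finite.mem_toFinset]
  rfl

lemma phi_le_of_covered {S : Set BW} {φ : BW → ℝ≥0∞} (hφ : HarmonicOn S φ) {a b : BW}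
    (ha : a ∈ S) (hb : b ∈ S) (hcov : CoveredBy a b) : φ b ≤ φ a := by
  rw [hφ a ha]
  exact Finset.single_le_sum (fun i _ => zero_le) (mem_upFinset.mpr ⟨hb, hcov⟩)

lemma exists_mid : ∀ {x y : BW}, x.Sublist y → x.length < y.length →
    ∃ z : BW, x.Sublist z ∧ z.Sublist y ∧ z.length + 1 = y.length := by
  intro x y h
  induction h with
  | slnil => intro h; simp at h
  | @cons l₁ l₂ a h ih =>
      intro _
      by_cases hl : l₁.length < l₂.length
      · obtain ⟨z, h1, h2, h3⟩ := ih hl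
        exact ⟨a :: z, h1.trans (List.sublist_cons_self a z), h2.cons₂ a, by simp [← h3]⟩
      · have : l₁.length = l₂.length := le_antisymm h.length_le (by omega)
        have : l₁ = l₂ := h.eq_of_length this
        subst this
        exact ⟨l₁, List.Sublist.refl _, List.sublist_cons_self a l₁, by simp⟩
  | @cons_cons l₁ l₂ a h ih =>
      intro hlen
      obtain ⟨z, h1, h2, h3⟩ := ih (by simpa using hlen)
      exact ⟨a :: z, h1.cons₂ a, h2.cons₂ a, by simp [← h3]⟩

lemma phi_antitone {S : Set BW} {φ : BW → ℝ≥0∞} (hφ : HarmonicOn S φ)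
    (hdc : ∀ x y : BW, x.Sublist y → y ∈ S → x ∈ S) :
    ∀ (n : ℕ) {x y : BW}, x.Sublist y → y.length = x.length + n → y ∈ S → φ y ≤ φ x := by
  intro n
  induction n with
  | zero =>
      intro x y h hl _
      rw [h.eq_of_length (by omega)]
  | succ n ih =>
      intro x y h hl hy
      obtain ⟨z, h1, h2, h3⟩ := exists_mid h (by omega)
      have hz : z ∈ S := hdc z y h2 hy
      exact (phi_le_of_covered hφ hz hy ⟨h2, by omega⟩).trans (ih h1 (by omega) hz)

lemma eq_top_of_forall_nat_mul_le {c X : ℝ≥0∞} (hc : 0 < c) (h : ∀ n : ℕ, (n : ℝ≥0∞) * c ≤ X) :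
    X = ⊤ := by
  by_contra hX
  by_cases hct : c = ⊤
  · have := h 1
    rw [hct] at this
    simp at this
    exact hX (top_le_iff.mp (by simpa [this] using h 1))
  · have hdiv : X / c ≠ ⊤ := by
      exact (ENNReal.div_lt_top hX hc.ne').ne
    obtain ⟨n, hn⟩ := ENNReal.exists_nat_gt hdiv
    have : X < n * c := by
      rwa [ENNReal.div_lt_iff (Or.inl hc.ne') (Or.inl hct)] at hn
    exact absurd (h n) (by simpa using this.not_ge)

/-! ### Cover characterization and the main induction -/

lemma covers_char {t : Template} {bl : Blk} (hbl : Radm t.clusters bl) {b : BW}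
    (hb : b ∈ Zt t) (hsubl : (ww bl).Sublist b) (hlen : b.length = (ww bl).length + 1) :
    ∃ i ∈ InfIdx t.clusters, b = ww (bump bl i) := by
  set cs := t.clusters with hcs
  obtain ⟨M, hbM⟩ := hb
  set M' := max M (tot bl) with hM'
  have hup : b.Sublist (ww (toBl cs M')) := by
    rw [← clWord_eq_ww]
    exact hbM.trans (clWord_mono _ (le_max_left _ _))
  have hfst : List.Forall₂ (fun a c => a.1 = c.1) bl (toBl cs M') := by
    rw [toBl, List.forall₂_map_right_iff]
    exact hbl.flip.imp (fun _ _ hcx => hcx.1)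
  obtain ⟨mid, hmid, h1, h2⟩ := sandwich bl _ hfst b (hbl.altB t.alternating)
    (hbl.posB t.pos) hsubl hup
  have htot : tot mid = tot bl + 1 := by
    have hmlen := congrArg List.length hmid
    rw [hlen, length_ww, length_ww] at hmlen
    omega
  obtain ⟨i, hilen, hbump⟩ := exists_bump bl mid h1 htot
  refine ⟨i, ?_, by rw [hmid, hbump]⟩
  have hics : i < cs.length := by rw [hbl.length_eq]; exact hilen
  obtain ⟨c, hc⟩ : ∃ c, cs[i]? = some c := ⟨cs[i], List.getElem?_eq_getElem hics⟩
  rw [mem_InfIdx]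
  refine ⟨hics, ?_⟩
  rw [getD_eq_of_getElem? hc]
  by_contra hcne
  obtain ⟨x, hx⟩ : ∃ x, bl[i]? = some x := ⟨bl[i], List.getElem?_eq_getElem hilen⟩
  have hxc : x.2 = c.2.toNat := (forall₂_rel_getElem? hbl i c x hc hx).2.2 hcne
  have hmidi : mid[i]? = some (x.1, x.2 + 1) := by
    rw [hbump, bump, getElem?_modAt_self _ _ _ hilen, hx]
    rfl
  have htbi : (toBl cs M')[i]? = some (c.1, if c.2 = ⊤ then M' else c.2.toNat) := by
    rw [toBl, List.getElem?_map, hc]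
    rfl
  have hrel : x.2 + 1 ≤ if c.2 = ⊤ then M' else c.2.toNat :=
    forall₂_rel_getElem? h2 i _ _ hmidi htbi
  rw [if_neg hcne] at hrel
  omega

lemma notmem_img {t : Template} {p : ℕ} (hp : IsFlangePos t p) {bl : Blk}
    (hbl : Radm t.clusters bl) {i : ℕ} (hiI : i ∈ InfIdx t.clusters)
    (heq : ww (cutAt (bump bl i) p) = ww bl) : False := by
  set cs := t.clusters with hcs
  have hlen := hbl.length_eq
  have hplt : p < cs.length := hp.1
  have hmapeq : (cutAt (bump bl i) p).map Prod.fst = bl.map Prod.fst := by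
    rw [cutAt, bump, map_fst_modAt, map_fst_modAt]
  have hip : i ≠ p := by
    intro h
    subst h
    exact hp.2.1 (mem_InfIdx.mp hiI).2
  obtain ⟨x, hx⟩ : ∃ x, bl[p]? = some x := ⟨bl[p], List.getElem?_eq_getElem (by omega)⟩
  have hxpos : 0 < x.2 := hbl.posB t.pos x (mem_of_getElem?' hx)
  have hdp : (cutAt (bump bl i) p)[p]? = some (x.1, x.2 - 1) := by
    rw [cutAt, getElem?_modAt_self _ _ _ (by rw [bump, length_modAt]; omega),
      bump, getElem?_modAt_ne _ _ _ _ (Ne.symm hip), hx]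
    rfl
  have hsub : (ww bl).Sublist (ww (cutAt (bump bl i) p)) := by rw [heq]
  have hle := snd_le bl _ (forall₂_fst_of_map_fst_eq hmapeq.symm)
    (hbl.altB t.alternating) (hbl.posB t.pos) hsub
  have hcontr : x.2 ≤ x.2 - 1 := forall₂_rel_getElem? hle p x (x.1, x.2 - 1) hx hdp
  omega

lemma word_cut_lt {F B : Blk} {x : Bool × ℕ} (hx1 : x.2 = 1) {k : ℕ} (hk : k < F.length) :
    ww (cutAt (bump (F ++ x :: B) k) F.length) = ww (bump F k) ++ ww B := by
  rw [bump, modAt_append_left _ _ _ _ hk]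
  have hl2 : (modAt (· + 1) F k).length = F.length := length_modAt _ _ _
  have h2 := modAt_append_right (· - 1) (modAt (· + 1) F k) (x :: B) 0
  rw [Nat.add_zero, hl2] at h2
  rw [cutAt, h2, ww_append]
  show _ ++ ww ((x.1, x.2 - 1) :: B) = _ ++ ww B
  rw [ww_cons, hx1]
  simp [bump]

lemma word_cut_gt {F B : Blk} {x : Bool × ℕ} (hx1 : x.2 = 1) (k : ℕ) :
    ww (cutAt (bump (F ++ x :: B) (F.length + 1 + k)) F.length) = ww F ++ ww (bump B k) := by
  have h1 : bump (F ++ x :: B) (F.length + 1 + k) = F ++ x :: bump B k := by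
    rw [bump, show F.length + 1 + k = F.length + (k + 1) from by omega,
      modAt_append_right]
    rfl
  rw [h1]
  have h2 := modAt_append_right (· - 1) F (x :: bump B k) 0
  rw [Nat.add_zero] at h2
  rw [cutAt, h2, ww_append]
  show _ ++ ww ((x.1, x.2 - 1) :: bump B k) = _
  rw [ww_cons, hx1]
  simp

lemma img_inj {t : Template} {p : ℕ} (hp : IsFlangePos t p) {bl : Blk}
    (hbl : Radm t.clusters bl) {i j : ℕ} (hiI : i ∈ InfIdx t.clusters)
    (hjI : j ∈ InfIdx t.clusters)
    (heq : ww (cutAt (bump bl i) p) = ww (cutAt (bump bl j) p)) : i = j := by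
  set cs := t.clusters with hcs
  have hlen := hbl.length_eq
  have hplt : p < cs.length := hp.1
  have hpbl : p < bl.length := by omega
  have hAlt : AltB bl := hbl.altB t.alternating
  have hPos : PosB bl := hbl.posB t.pos
  have hip : i ≠ p := fun h => hp.2.1 (h ▸ (mem_InfIdx.mp hiI).2)
  have hjp : j ≠ p := fun h => hp.2.1 (h ▸ (mem_InfIdx.mp hjI).2)
  have hibl : i < bl.length := by have := (mem_InfIdx.mp hiI).1; omega
  have hjbl : j < bl.length := by have := (mem_InfIdx.mp hjI).1; omega
  obtain ⟨x, hx⟩ : ∃ x, bl[p]? = some x := ⟨bl[p], List.getElem?_eq_getElem hpbl⟩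
  have hxpos : 0 < x.2 := hPos x (mem_of_getElem?' hx)
  obtain ⟨c, hc⟩ : ∃ c, cs[p]? = some c := ⟨cs[p], List.getElem?_eq_getElem hplt⟩
  have hfinD : ((t.clusters).getD p (true, 1)).2 ≠ ⊤ := hp.2.1
  have hcfin : c.2 ≠ ⊤ := by rwa [getD_eq_of_getElem? hc] at hfinD
  have hxc : x.2 = c.2.toNat := (forall₂_rel_getElem? hbl p c x hc hx).2.2 hcfin
  by_cases hx2 : 2 ≤ x.2
  · -- no merging: all blocks positive
    have hPos' : ∀ k, k ≠ p → PosB (cutAt (bump bl k) p) := by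
      intro k hk
      refine PosB_modAt _ _ _ (PosB_bump bl k hPos) ?_
      intro y hy
      rw [bump, getElem?_modAt_ne _ _ _ _ (Ne.symm hk), hx] at hy
      have hyx : x = y := by simpa using hy
      subst hyx
      show 0 < x.2 - 1
      omega
    have hmf : (cutAt (bump bl i) p).map Prod.fst = (cutAt (bump bl j) p).map Prod.fst := by
      rw [cutAt, cutAt, bump, bump, map_fst_modAt, map_fst_modAt, map_fst_modAt, map_fst_modAt]
    have hli := ww_inj (forall₂_fst_of_map_fst_eq hmf)
      (AltB_modAt _ _ _ (AltB_modAt _ _ _ hAlt)) (hPos' i hip) (hPos' j hjp) heq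
    have hci : cutAt (bump bl i) p = bump (cutAt bl p) i := modAt_comm _ _ bl p i (Ne.symm hip)
    have hcj : cutAt (bump bl j) p = bump (cutAt bl p) j := modAt_comm _ _ bl p j (Ne.symm hjp)
    rw [hci, hcj] at hli
    exact bump_index_inj (by rw [cutAt, length_modAt]; omega) hli
  · -- merging case: the p-th block disappears
    have hx1 : x.2 = 1 := by omega
    set F := bl.take p with hF
    set B := bl.drop (p + 1) with hB
    have hFlen : F.length = p := by rw [hF, List.length_take]; omega
    have hsplit : bl = F ++ x :: B := by
      have h1 := List.take_append_drop p bl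
      have h2 : bl.drop p = x :: B := by
        rw [hB, List.drop_eq_getElem_cons hpbl]
        have h3 : bl[p]? = some bl[p] := List.getElem?_eq_getElem hpbl
        rw [hx] at h3
        rw [Option.some_inj.mp h3]
      rw [← h1, h2]
    have hBlen : bl.length = p + 1 + B.length := by
      have := congrArg List.length hsplit
      simp [hFlen] at this
      omega
    have hAlt' : AltB (F ++ x :: B) := hsplit ▸ hAlt
    have hAltF : AltB F := (List.isChain_append.mp hAlt').1
    have hAltxB : AltB (x :: B) := (List.isChain_append.mp hAlt').2.1
    have hAltB : AltB B := hAltxB.tail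
    have hPosF : PosB F := fun y hy => hPos y (hsplit ▸ List.mem_append_left _ hy)
    have hPosB : PosB B := fun y hy =>
      hPos y (hsplit ▸ List.mem_append_right _ (List.mem_cons_of_mem _ hy))
    have key_lt : ∀ k, k < p → ww (cutAt (bump bl k) p) = ww (bump F k) ++ ww B := by
      intro k hk
      conv_lhs => rw [hsplit, ← hFlen]
      exact word_cut_lt hx1 (by omega)
    have key_gt : ∀ k, p < k → ww (cutAt (bump bl k) p) = ww F ++ ww (bump B (k - p - 1)) := by
      intro k hk1
      have hthis := word_cut_gt (F := F) (B := B) (x := x) hx1 (k - p - 1)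
      rw [hFlen, ← hsplit, show p + 1 + (k - p - 1) = k from by omega] at hthis
      exact hthis
    have mixed : ∀ k l, k ∈ InfIdx cs → l ∈ InfIdx cs → k < p → p < l →
        ww (cutAt (bump bl k) p) = ww (cutAt (bump bl l) p) → False := by
      intro k l hkI hlI hkp hpl heq2
      have hlbl : l < bl.length := by have := (mem_InfIdx.mp hlI).1; omega
      have e : ww (bump F k) ++ ww B = ww F ++ ww (bump B (l - p - 1)) := by
        rw [← key_lt k hkp, ← key_gt l hpl]
        exact heq2
      have hFne : F ≠ [] := by
        intro h
        rw [h] at hFlen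
        simp at hFlen
        omega
      have hBne : B ≠ [] := by
        intro h
        rw [h] at hBlen
        simp at hBlen
        omega
      have hlastF : (F.getLast hFne).1 ≠ x.1 := by
        have hrel := (List.isChain_append.mp hAlt').2.2
        exact hrel (F.getLast hFne) (List.getLast?_eq_getLast hFne ▸ rfl) x rfl
      have hheadB : (B.head hBne).1 ≠ x.1 := by
        have hrel := (List.isChain_cons.mp hAltxB).1
        exact fun h => (hrel (B.head hBne) (List.head?_eq_head hBne ▸ rfl)) h.symm
      have hσF : (F.getLast hFne).1 = !x.1 := by
        revert hlastF
        cases (F.getLast hFne).1 <;> cases x.1 <;> simp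
      have hσB : (B.head hBne).1 = !x.1 := by
        revert hheadB
        cases (B.head hBne).1 <;> cases x.1 <;> simp
      have hmix := mix hAltF hPosF hAltB hPosB hFne hBne hσF hσB
        (show k < F.length from by omega) (show l - p - 1 < B.length from by omega) e
      -- hmix : k = F.length - 1 ∧ l - p - 1 = 0
      have hnsep : ¬(0 < p ∧ p + 1 < cs.length ∧ (cs.getD p (true, 1)).2 = 1 ∧
          (cs.getD (p - 1) (true, 1)).2 = ⊤ ∧ (cs.getD (p + 1) (true, 1)).2 = ⊤) := hp.2.2
      apply hnsep
      have hk : k = p - 1 := by rw [hmix.1, hFlen]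
      have hl2 := hmix.2
      have hl : l = p + 1 := by omega
      refine ⟨by omega, by have := (mem_InfIdx.mp hlI).1; omega, ?_, ?_, ?_⟩
      · rw [getD_eq_of_getElem? hc]
        lift c.2 to ℕ using hcfin with m hm
        rw [ENat.toNat_coe] at hxc
        have : m = 1 := by omega
        rw [this]
        rfl
      · have := (mem_InfIdx.mp hkI).2
        rwa [hk] at this
      · have := (mem_InfIdx.mp hlI).2
        rwa [hl] at this
    rcases Nat.lt_trichotomy i p with hi | hi | hi
    · rcases Nat.lt_trichotomy j p with hj | hj | hj
      · -- both below
        have e : ww (bump F i) ++ ww B = ww (bump F j) ++ ww B := by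
          rw [← key_lt i hi, ← key_lt j hj]
          exact heq
        have e2 := List.append_cancel_right e
        have hmf : (bump F i).map Prod.fst = (bump F j).map Prod.fst := by
          rw [bump, bump, map_fst_modAt, map_fst_modAt]
        have := ww_inj (forall₂_fst_of_map_fst_eq hmf) (AltB_modAt _ _ _ hAltF)
          (PosB_bump _ _ hPosF) (PosB_bump _ _ hPosF) e2
        exact bump_index_inj (by omega) this
      · exact absurd hj hjp
      · exact (mixed i j hiI hjI hi hj heq).elim
    · exact absurd hi hip
    · rcases Nat.lt_trichotomy j p with hj | hj | hj
      · exact (mixed j i hjI hiI hj hi heq.symm).elim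
      · exact absurd hj hjp
      · -- both above
        have e : ww F ++ ww (bump B (i - p - 1)) = ww F ++ ww (bump B (j - p - 1)) := by
          rw [← key_gt i hi, ← key_gt j hj]
          exact heq
        have e2 := List.append_cancel_left e
        have hmf : (bump B (i - p - 1)).map Prod.fst = (bump B (j - p - 1)).map Prod.fst := by
          rw [bump, bump, map_fst_modAt, map_fst_modAt]
        have := ww_inj (forall₂_fst_of_map_fst_eq hmf) (AltB_modAt _ _ _ hAltB)
          (PosB_bump _ _ hPosB) (PosB_bump _ _ hPosB) e2
        have hbi : i - p - 1 = j - p - 1 := bump_index_inj (by omega) this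
        omega

/-! ### The main induction and conclusion -/

lemma philower (t : Template) (p : ℕ) (hp : IsFlangePos t p)
    (φ : BW → ℝ≥0∞) (hφ : HarmonicOn (Zt t) φ) :
    ∀ (n : ℕ) (bl : Blk), Radm t.clusters bl →
      (n : ℝ≥0∞) * φ (ww bl) ≤ φ (ww (cutAt bl p)) := by
  intro n
  induction n with
  | zero => intro bl _; simp
  | succ n IH =>
      intro bl hbl
      set cs := t.clusters with hcs
      have hlen := hbl.length_eq
      have hplt : p < cs.length := hp.1
      have hpbl : p < bl.length := by omega
      have hPos := hbl.posB t.pos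
      obtain ⟨x, hx⟩ : ∃ x, bl[p]? = some x := ⟨bl[p], List.getElem?_eq_getElem hpbl⟩
      have hxpos : 0 < x.2 := hPos x (mem_of_getElem?' hx)
      have hwblZ : ww bl ∈ Zt t := mem_Zcl_of_fits hbl.fits
      have hνZ : ww (cutAt bl p) ∈ Zt t := mem_Zcl_of_fits (fits_cut hbl.fits p)
      have hcov0 : CoveredBy (ww (cutAt bl p)) (ww bl) := by
        refine ⟨ww_sublist_of_forall₂
          (forall₂_modAt_le_self _ (fun n => Nat.sub_le n 1) bl p), ?_⟩
        rw [length_ww, length_ww]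
        exact (tot_cut bl p x hx hxpos).symm
      have himg : ∀ i ∈ InfIdx cs, Radm cs (bump bl i) := by
        intro i hi
        have hics := (mem_InfIdx.mp hi).1
        obtain ⟨c, hc⟩ : ∃ c, cs[i]? = some c := ⟨cs[i], List.getElem?_eq_getElem hics⟩
        exact hbl.bump hc (by rw [← getD_eq_of_getElem? hc]; exact (mem_InfIdx.mp hi).2)
      have himgZ : ∀ i ∈ InfIdx cs, ww (cutAt (bump bl i) p) ∈ Zt t := fun i hi =>
        mem_Zcl_of_fits (fits_cut (himg i hi).fits p)
      have himgcov : ∀ i ∈ InfIdx cs, CoveredBy (ww (cutAt bl p)) (ww (cutAt (bump bl i) p)) := by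
        intro i hi
        have hipne : p ≠ i := by
          intro h
          exact hp.2.1 (h ▸ (mem_InfIdx.mp hi).2)
        have hcomm : cutAt (bump bl i) p = bump (cutAt bl p) i :=
          modAt_comm _ _ bl p i hipne
        constructor
        · rw [hcomm]
          exact ww_sublist_of_forall₂ (forall₂_le_self_modAt _ (fun n => Nat.le_succ n) _ i)
        · rw [hcomm, length_ww, length_ww,
            tot_bump _ i (by rw [cutAt, length_modAt]; have := (mem_InfIdx.mp hi).1; omega)]
      have hharm2 : φ (ww (cutAt bl p)) = ∑ b ∈ upFinset (Zt t) (ww (cutAt bl p)), φ b :=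
        hφ _ hνZ
      have hupsub : upFinset (Zt t) (ww bl) ⊆ (InfIdx cs).image fun i => ww (bump bl i) := by
        intro b hb
        rw [mem_upFinset] at hb
        obtain ⟨i, hi, hbi⟩ := covers_char hbl hb.1 hb.2.1 hb.2.2
        exact Finset.mem_image.mpr ⟨i, hi, hbi.symm⟩
      have hinj1 : ∀ i ∈ InfIdx cs, ∀ j ∈ InfIdx cs,
          ww (bump bl i) = ww (bump bl j) → i = j := by
        intro i hi j hj hww
        have hmf : (bump bl i).map Prod.fst = (bump bl j).map Prod.fst := by
          rw [bump, bump, map_fst_modAt, map_fst_modAt]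
        have := ww_inj (forall₂_fst_of_map_fst_eq hmf)
          (AltB_modAt _ _ _ (hbl.altB t.alternating))
          (PosB_bump _ _ hPos) (PosB_bump _ _ hPos) hww
        exact bump_index_inj (by have := (mem_InfIdx.mp hi).1; omega) this
      have hstep1 : φ (ww bl) ≤ ∑ i ∈ InfIdx cs, φ (ww (bump bl i)) := by
        rw [hφ _ hwblZ]
        refine (Finset.sum_le_sum_of_subset hupsub).trans ?_
        rw [Finset.sum_image hinj1]
      have hstep2 : ∀ i ∈ InfIdx cs,
          (n : ℝ≥0∞) * φ (ww (bump bl i)) ≤ φ (ww (cutAt (bump bl i) p)) :=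
        fun i hi => IH (bump bl i) (himg i hi)
      have hnotmem : ww bl ∉ (InfIdx cs).image fun i => ww (cutAt (bump bl i) p) := by
        intro hmem
        obtain ⟨i, hi, hieq⟩ := Finset.mem_image.mp hmem
        exact notmem_img hp hbl hi hieq
      have hinj2 : ∀ i ∈ InfIdx cs, ∀ j ∈ InfIdx cs,
          ww (cutAt (bump bl i) p) = ww (cutAt (bump bl j) p) → i = j :=
        fun i hi j hj h => img_inj hp hbl hi hj h
      have hSsub : insert (ww bl) ((InfIdx cs).image fun i => ww (cutAt (bump bl i) p))
          ⊆ upFinset (Zt t) (ww (cutAt bl p)) := by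
        intro b hb
        rcases Finset.mem_insert.mp hb with rfl | hb
        · exact mem_upFinset.mpr ⟨hwblZ, hcov0⟩
        · obtain ⟨i, hi, rfl⟩ := Finset.mem_image.mp hb
          exact mem_upFinset.mpr ⟨himgZ i hi, himgcov i hi⟩
      calc ((n + 1 : ℕ) : ℝ≥0∞) * φ (ww bl)
          = φ (ww bl) + (n : ℝ≥0∞) * φ (ww bl) := by push_cast; ring
        _ ≤ φ (ww bl) + (n : ℝ≥0∞) * ∑ i ∈ InfIdx cs, φ (ww (bump bl i)) :=
            add_le_add_right (mul_le_mul_right hstep1 _) _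
        _ = φ (ww bl) + ∑ i ∈ InfIdx cs, (n : ℝ≥0∞) * φ (ww (bump bl i)) := by
            rw [Finset.mul_sum]
        _ ≤ φ (ww bl) + ∑ i ∈ InfIdx cs, φ (ww (cutAt (bump bl i) p)) :=
            add_le_add_right (Finset.sum_le_sum hstep2) _
        _ = ∑ b ∈ insert (ww bl) ((InfIdx cs).image fun i => ww (cutAt (bump bl i) p)), φ b := by
            rw [Finset.sum_insert hnotmem, Finset.sum_image hinj2]
        _ ≤ ∑ b ∈ upFinset (Zt t) (ww (cutAt bl p)), φ b := Finset.sum_le_sum_of_subset hSsub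
        _ = φ (ww (cutAt bl p)) := hharm2.symm

lemma toBl_decAt : ∀ (cs : List (Bool × ℕ∞)) (p : ℕ), p < cs.length →
    (cs.getD p (true, 1)).2 ≠ ⊤ → ∀ N, toBl (decAt cs p) N = cutAt (toBl cs N) p := by
  intro cs
  induction cs with
  | nil => intro p hp; simp at hp
  | cons c cs ih =>
      intro p hp hfin N
      cases p with
      | zero =>
          have hcfin : c.2 ≠ ⊤ := by simpa using hfin
          show toBl (List.set (c :: cs) 0 _) N = _
          rw [List.getD_cons_zero, List.set_cons_zero]
          show (c.1, if c.2 - 1 = ⊤ then N else (c.2 - 1).toNat) :: toBl cs N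
            = (c.1, (if c.2 = ⊤ then N else c.2.toNat) - 1) :: toBl cs N
          congr 1
          rw [← ENat.coe_toNat hcfin]
          set m := c.2.toNat with hmdef
          have h1 : (m : ℕ∞) - 1 = ((m - 1 : ℕ) : ℕ∞) := by
            rw [← Nat.cast_one, ← ENat.coe_sub]
          rw [h1, if_neg (ENat.coe_ne_top (m - 1)), if_neg (ENat.coe_ne_top m),
            ENat.toNat_coe, ENat.toNat_coe]
      | succ p =>
          have hp' : p < cs.length := by simpa using hp
          have hfin' : (cs.getD p (true, 1)).2 ≠ ⊤ := by
            rwa [List.getD_cons_succ] at hfin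
          show toBl (List.set (c :: cs) (p + 1) _) N = _
          rw [List.getD_cons_succ, List.set_cons_succ]
          show (c.1, _) :: toBl (List.set cs p _) N = (c.1, _) :: cutAt (toBl cs N) p
          congr 1
          exact ih p hp' hfin' N

lemma Radm_toBl (cs : List (Bool × ℕ∞)) {N : ℕ} (hN : 1 ≤ N) : Radm cs (toBl cs N) := by
  rw [Radm, toBl, List.forall₂_map_right_iff]
  rw [List.forall₂_same]
  intro c _
  refine ⟨rfl, fun hc => ?_, fun hc => ?_⟩
  · simp [hc, hN]
  · simp [hc]

end AuxProof

/-- Lemma 4.6 of the paper.  Let `t` be a semifinite template and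
`φ` a strictly positive harmonic function on the graph `Z(t)`.  Then `φ(λ) = +∞`
for every `λ ∈ J(t)`. -/
theorem infinite_on_Jt (t : Template) (hsf : ¬t.IsFiniteTemplate)
    (φ : BW → ℝ≥0∞) (hφ : HarmonicOn (Zt t) φ) (hpos : ∀ a ∈ Zt t, 0 < φ a) :
    ∀ a ∈ Jt t, φ a = ⊤ := by
  intro a ha
  obtain ⟨p, hfl, N₀, hsub⟩ := ha
  set cs := t.clusters with hcs
  set N := N₀ + 1 with hN
  have hplt : p < cs.length := hfl.1
  have hfin : (cs.getD p (true, 1)).2 ≠ ⊤ := hfl.2.1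
  have hsub' : a.Sublist (clWord (decAt cs p) N) :=
    hsub.trans (clWord_mono _ (Nat.le_succ _))
  have hkey : clWord (decAt cs p) N = ww (cutAt (toBl cs N) p) := by
    rw [clWord_eq_ww, toBl_decAt cs p hplt hfin]
  have hRadm : Radm cs (toBl cs N) := Radm_toBl cs (by omega)
  have hκZ : ww (toBl cs N) ∈ Zt t := mem_Zcl_of_fits hRadm.fits
  have hκpos : 0 < φ (ww (toBl cs N)) := hpos _ hκZ
  have hνZ : ww (cutAt (toBl cs N) p) ∈ Zt t := mem_Zcl_of_fits (fits_cut hRadm.fits p)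
  have hνtop : φ (ww (cutAt (toBl cs N) p)) = ⊤ :=
    eq_top_of_forall_nat_mul_le hκpos (fun n => philower t p hfl φ hφ n _ hRadm)
  have hdc : ∀ x y : BW, x.Sublist y → y ∈ Zt t → x ∈ Zt t := fun x y h hy => Zcl_dcl h hy
  have hla := hsub'.length_le
  have hmono := phi_antitone hφ hdc ((clWord (decAt cs p) N).length - a.length) hsub'
    (by omega) (by rw [hkey]; exact hνZ)
  rw [hkey, hνtop] at hmono
  exact top_le_iff.mp hmono

end Zigzag
end
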